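/- arXiv:2104.06384 — 4 statements merged into one kernel-verified Lean document; each statement's English description precedes it below -/
import Mathlib

section
/- Let d ≥ 1, let Σ be a d×d real positive definite matrix, let λ > 0, let Z be a random vector with distribution N(0, Σ) and ε an independent random vector with distribution N(0, I_d), and set Z' := Z + λε. Then E[‖Z' − Z‖²_{Σ⁻¹} · min{1, φ(Z'; 0, Σ)/φ(Z; 0, Σ)}] = 2λ² · E[‖ε‖²_{Σ⁻¹} · Φ(−λ‖ε‖_{Σ⁻¹}/2)]. (This is the ESJD formula of Corollary 1 for a random-walk Metropolis chain started in stationarity at a centered Gaussian target with covariance Σ and identity proposal matrix M = I.) -/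
open MeasureTheory ProbabilityTheory Real Matrix Filter

/-- CDF of the standard normal distribution. -/
noncomputable def stdNormalCDF (x : ℝ) : ℝ :=
  ((gaussianReal 0 1) (Set.Iic x)).toReal

/-- Quadratic form `vᵀ A v`. -/
noncomputable def quadForm {d : ℕ} (A : Matrix (Fin d) (Fin d) ℝ) (v : Fin d → ℝ) : ℝ :=
  v ⬝ᵥ (A *ᵥ v)

/-- Density of the `d`-dimensional Gaussian with mean `μ` and covariance `S`. -/
noncomputable def mvGaussianPdf {d : ℕ} (μ : Fin d → ℝ) (S : Matrix (Fin d) (Fin d) ℝ)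
    (x : Fin d → ℝ) : ℝ :=
  (2 * Real.pi) ^ (-(d : ℝ) / 2) * S.det ^ (-(1 : ℝ) / 2) *
    Real.exp (-((x - μ) ⬝ᵥ (S⁻¹ *ᵥ (x - μ))) / 2)

/-- The `d`-dimensional Gaussian distribution `N(μ, S)`. -/
noncomputable def mvGaussian {d : ℕ} (μ : Fin d → ℝ) (S : Matrix (Fin d) (Fin d) ℝ) :
    Measure (Fin d → ℝ) :=
  volume.withDensity (fun x => ENNReal.ofReal (mvGaussianPdf μ S x))


section AuxESJD
open MeasureTheory ProbabilityTheory Real Matrix Filter Set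
open scoped NNReal ENNReal MatrixOrder



lemma stdNormalCDF_nonneg (x : ℝ) : 0 ≤ stdNormalCDF x := ENNReal.toReal_nonneg

lemma gaussianReal01_Iic (r : ℝ) :
    gaussianReal 0 1 (Set.Iic r) = ENNReal.ofReal (stdNormalCDF r) :=
  (ENNReal.ofReal_toReal (measure_ne_top _ _)).symm

lemma gaussianReal_eq_map (m : ℝ) {s : ℝ} (hs : 0 < s) :
    gaussianReal m ⟨s^2, sq_nonneg s⟩ = (gaussianReal 0 1).map (fun x => s * x + m) := by
  have h1 : (gaussianReal 0 1).map (s * ·) = gaussianReal 0 ⟨s^2, sq_nonneg s⟩ := by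
    rw [gaussianReal_map_const_mul]
    congr 1
    · ring
    · ext : 1; simp; rfl
  have h2 := gaussianReal_map_add_const (μ := 0) (v := ⟨s^2, sq_nonneg s⟩) m
  rw [← h1, Measure.map_map (by fun_prop) (by fun_prop), zero_add] at h2
  rw [← h2]
  rfl

lemma gaussianReal_Iic (m : ℝ) {s : ℝ} (hs : 0 < s) (t : ℝ) :
    gaussianReal m ⟨s^2, sq_nonneg s⟩ (Set.Iic t)
      = ENNReal.ofReal (stdNormalCDF ((t - m)/s)) := by
  rw [gaussianReal_eq_map m hs, Measure.map_apply (by fun_prop) measurableSet_Iic]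
  rw [show (fun x => s * x + m) ⁻¹' (Set.Iic t) = Set.Iic ((t - m)/s) by
    ext x
    simp only [Set.mem_preimage, Set.mem_Iic, le_div_iff₀ hs]
    constructor <;> intro h <;> nlinarith]
  exact gaussianReal01_Iic _

lemma gaussianReal01_Ici (r : ℝ) :
    gaussianReal 0 1 (Set.Ici r) = ENNReal.ofReal (stdNormalCDF (-r)) := by
  have hmap : (gaussianReal 0 1).map ((-1 : ℝ) * ·) = gaussianReal 0 1 := by
    rw [gaussianReal_map_const_mul]
    norm_num
  conv_lhs => rw [← hmap]
  rw [Measure.map_apply (by fun_prop) measurableSet_Ici]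
  rw [show ((-1 : ℝ) * ·) ⁻¹' (Set.Ici r) = Set.Iic (-r) by
    ext x; simp only [Set.mem_preimage, Set.mem_Ici, Set.mem_Iic]; constructor <;> intro h <;> linarith]
  exact gaussianReal01_Iic _

lemma gaussianReal_Ici (m : ℝ) {s : ℝ} (hs : 0 < s) (t : ℝ) :
    gaussianReal m ⟨s^2, sq_nonneg s⟩ (Set.Ici t)
      = ENNReal.ofReal (stdNormalCDF (-((t - m)/s))) := by
  rw [gaussianReal_eq_map m hs, Measure.map_apply (by fun_prop) measurableSet_Ici]
  rw [show (fun x => s * x + m) ⁻¹' (Set.Ici t) = Set.Ici ((t - m)/s) by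
    ext x
    simp only [Set.mem_preimage, Set.mem_Ici, le_div_iff₀ hs, div_le_iff₀ hs]
    constructor <;> intro h <;> nlinarith]
  exact gaussianReal01_Ici _

lemma gaussianReal_singleton {v : ℝ≥0} (hv : v ≠ 0) (m t : ℝ) : gaussianReal m v {t} = 0 := by
  rw [gaussianReal_of_var_ne_zero _ hv, withDensity_apply _ (measurableSet_singleton t),
    Measure.restrict_eq_zero.mpr (by simp)]
  simp

lemma gaussianReal_Iio (m : ℝ) {s : ℝ} (hs : 0 < s) (t : ℝ) :
    gaussianReal m ⟨s^2, sq_nonneg s⟩ (Set.Iio t)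
      = ENNReal.ofReal (stdNormalCDF ((t - m)/s)) := by
  have hv : (⟨s^2, sq_nonneg s⟩ : ℝ≥0) ≠ 0 := by
    intro h
    have := congrArg NNReal.toReal h
    change s^2 = 0 at this
    nlinarith
  have h0 := gaussianReal_singleton hv m t
  have : gaussianReal m ⟨s^2, sq_nonneg s⟩ (Set.Iic t)
      = gaussianReal m ⟨s^2, sq_nonneg s⟩ (Set.Iio t) := by
    rw [← Set.Iio_union_right]
    refine le_antisymm ?_ (measure_mono (Set.subset_union_left))
    calc _ ≤ _ := measure_union_le _ _
    _ = _ := by rw [gaussianReal_singleton hv m t, add_zero]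
  rw [← this]; exact gaussianReal_Iic m hs t

/-- pointwise product of Gaussian densities identity -/
lemma gauss_pdf_mul {V : ℝ} (hV : 0 < V) (c x y : ℝ) :
    gaussianPDFReal 0 1 x * gaussianPDFReal (c*x) ⟨V, hV.le⟩ y
      = gaussianPDFReal 0 ⟨V + c^2, by positivity⟩ y
        * gaussianPDFReal (c*y/(V+c^2)) ⟨V/(V+c^2), by positivity⟩ x := by
  have hA : 0 < V + c^2 := by positivity
  simp only [gaussianPDFReal, NNReal.coe_mk, NNReal.coe_one]
  dsimp only [NNReal.toReal]
  rw [mul_mul_mul_comm, mul_mul_mul_comm ((√(2*π*(V+c^2)))⁻¹)]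
  congr 1
  · rw [← mul_inv, ← mul_inv, ← Real.sqrt_mul (by positivity), ← Real.sqrt_mul (by positivity)]
    congr 2
    field_simp
  · rw [← Real.exp_add, ← Real.exp_add]
    congr 1
    field_simp
    ring

lemma nnvar_ne_zero {s : ℝ} (hs : 0 < s) : (⟨s^2, sq_nonneg s⟩ : ℝ≥0) ≠ 0 := by
  intro h
  have := congrArg NNReal.toReal h
  change s^2 = 0 at this
  nlinarith

lemma measurable_gaussianPDF_pair (c : ℝ) (v : ℝ≥0) :
    Measurable (fun p : ℝ × ℝ => ENNReal.ofReal (gaussianPDFReal 0 1 p.1)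
      * gaussianPDF (c * p.1) v p.2) := by
  unfold gaussianPDF gaussianPDFReal
  fun_prop

/-- convolution step: integrating a Gaussian CDF against a Gaussian density -/
lemma lintegral_gaussianPDF_mul_cdf {s : ℝ} (hs : 0 < s) (c t : ℝ) :
    ∫⁻ x, ENNReal.ofReal (gaussianPDFReal 0 1 x)
        * ENNReal.ofReal (stdNormalCDF ((t - c*x)/s)) ∂volume
      = ENNReal.ofReal (stdNormalCDF (t / Real.sqrt (s^2 + c^2))) := by
  have hA : (0:ℝ) < s^2 + c^2 := by positivity
  have hstep : ∀ x : ℝ, ENNReal.ofReal (stdNormalCDF ((t - c*x)/s))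
      = ∫⁻ y in Set.Iic t, gaussianPDF (c*x) ⟨s^2, sq_nonneg s⟩ y ∂volume := by
    intro x
    rw [← withDensity_apply _ measurableSet_Iic, ← gaussianReal_of_var_ne_zero _ (nnvar_ne_zero hs),
      gaussianReal_Iic _ hs]
  simp_rw [hstep]
  have hpull : ∀ x : ℝ, ENNReal.ofReal (gaussianPDFReal 0 1 x)
        * ∫⁻ y in Set.Iic t, gaussianPDF (c*x) ⟨s^2, sq_nonneg s⟩ y ∂volume
      = ∫⁻ y in Set.Iic t, ENNReal.ofReal (gaussianPDFReal 0 1 x)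
        * gaussianPDF (c*x) ⟨s^2, sq_nonneg s⟩ y ∂volume :=
    fun x => (lintegral_const_mul _ (measurable_gaussianPDF _ _)).symm
  simp_rw [hpull]
  rw [lintegral_lintegral_swap ((measurable_gaussianPDF_pair c _).aemeasurable)]
  have hinner : ∀ y : ℝ, ∫⁻ x, ENNReal.ofReal (gaussianPDFReal 0 1 x)
      * gaussianPDF (c*x) ⟨s^2, sq_nonneg s⟩ y ∂volume
      = gaussianPDF 0 ⟨s^2 + c^2, hA.le⟩ y := by
    intro y
    have hVs : (0:ℝ) < s^2 := by positivity
    simp_rw [gaussianPDF, ← ENNReal.ofReal_mul (gaussianPDFReal_nonneg 0 1 _)]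
    have : ∀ x, gaussianPDFReal 0 1 x * gaussianPDFReal (c*x) ⟨s^2, sq_nonneg s⟩ y
        = gaussianPDFReal 0 ⟨s^2 + c^2, hA.le⟩ y
          * gaussianPDFReal (c*y/(s^2+c^2)) ⟨s^2/(s^2+c^2), by positivity⟩ x := by
      intro x
      have h := gauss_pdf_mul hVs c x y
      convert h using 3
    rw [lintegral_congr fun x => congrArg ENNReal.ofReal (this x)]
    simp_rw [ENNReal.ofReal_mul (gaussianPDFReal_nonneg 0 ⟨s^2 + c^2, hA.le⟩ y)]
    rw [lintegral_const_mul _ ((measurable_gaussianPDFReal (c*y/(s^2+c^2)) ⟨s^2/(s^2+c^2), by positivity⟩).ennreal_ofReal)]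
    rw [lintegral_gaussianPDFReal_eq_one (v := ⟨s^2/(s^2+c^2), by positivity⟩) _ (by
      intro h
      have := congrArg NNReal.toReal h
      change s^2/(s^2+c^2) = 0 at this
      have : s^2/(s^2+c^2) > 0 := by positivity
      linarith), mul_one]
  simp_rw [hinner]
  have hcoe : (⟨s^2 + c^2, hA.le⟩ : ℝ≥0) = ⟨(Real.sqrt (s^2+c^2))^2, sq_nonneg _⟩ := by
    ext; simp [Real.sq_sqrt hA.le]
  rw [← withDensity_apply _ measurableSet_Iic,
    ← gaussianReal_of_var_ne_zero _ (show (⟨s^2 + c^2, hA.le⟩ : ℝ≥0) ≠ 0 by rw [hcoe]; exact nnvar_ne_zero (Real.sqrt_pos.2 hA)),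
    hcoe, gaussianReal_Iic _ (Real.sqrt_pos.2 hA), sub_zero]

noncomputable def stdPdfR (n : ℕ) (u : Fin n → ℝ) : ℝ :=
  (2*π)^(-(n:ℝ)/2) * Real.exp (-(u ⬝ᵥ u)/2)

noncomputable def stdPdfE (n : ℕ) (u : Fin n → ℝ) : ℝ≥0∞ := ENNReal.ofReal (stdPdfR n u)

lemma dotProduct_self_nonneg {n : ℕ} (v : Fin n → ℝ) : 0 ≤ v ⬝ᵥ v :=
  Finset.sum_nonneg fun i _ => mul_self_nonneg _

lemma dotProduct_self_pos {n : ℕ} {v : Fin n → ℝ} (hv : v ≠ 0) : 0 < v ⬝ᵥ v := by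
  rcases Function.ne_iff.1 hv with ⟨i, hi⟩
  refine Finset.sum_pos' (fun j _ => mul_self_nonneg _) ⟨i, Finset.mem_univ i, ?_⟩
  exact mul_self_pos.2 hi

lemma measurable_dot {n : ℕ} (b : Fin n → ℝ) : Measurable (fun u : Fin n → ℝ => b ⬝ᵥ u) := by
  simp only [dotProduct]; fun_prop

lemma measurable_stdPdfR (n : ℕ) : Measurable (stdPdfR n) := by
  unfold stdPdfR dotProduct; fun_prop

lemma measurable_stdPdfE (n : ℕ) : Measurable (stdPdfE n) :=
  (measurable_stdPdfR n).ennreal_ofReal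

lemma dot_cons {n : ℕ} (b : Fin (n+1) → ℝ) (x : ℝ) (u : Fin n → ℝ) :
    b ⬝ᵥ Fin.cons x u = b 0 * x + Fin.tail b ⬝ᵥ u := by
  simp [dotProduct, Fin.sum_univ_succ, Fin.tail]

lemma cons_symm_apply {n : ℕ} (p : ℝ × (Fin n → ℝ)) :
    (MeasurableEquiv.piFinSuccAbove (fun _ : Fin (n+1) => ℝ) 0).symm p = Fin.cons p.1 p.2 := by
  funext i
  induction i using Fin.cases <;>
    simp [MeasurableEquiv.piFinSuccAbove, Fin.insertNth_zero]

lemma lintegral_pi_succ (n : ℕ) (f : (Fin (n+1) → ℝ) → ℝ≥0∞) (hf : Measurable f) :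
    ∫⁻ u, f u ∂(volume : Measure (Fin (n+1) → ℝ))
      = ∫⁻ p : ℝ × (Fin n → ℝ), f (Fin.cons p.1 p.2)
          ∂((volume : Measure ℝ).prod (volume : Measure (Fin n → ℝ))) := by
  have MP := (measurePreserving_piFinSuccAbove (fun _ : Fin (n+1) => (volume : Measure ℝ)) 0).symm
  rw [volume_pi, ← MP.lintegral_comp hf]
  have : (volume : Measure (Fin n → ℝ)) = Measure.pi (fun _ => volume) := volume_pi
  rw [this]
  refine lintegral_congr fun p => ?_
  rw [cons_symm_apply]

lemma stdPdfR_cons (n : ℕ) (x : ℝ) (u : Fin n → ℝ) :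
    stdPdfR (n+1) (Fin.cons x u) = gaussianPDFReal 0 1 x * stdPdfR n u := by
  unfold stdPdfR gaussianPDFReal
  rw [dot_cons, Fin.cons_zero, Fin.tail_cons]
  have h2π : (0:ℝ) < 2*π := by positivity
  have hc : ((2*π))^(-((n:ℝ)+1)/2) = (√(2*π))⁻¹ * (2*π)^(-(n:ℝ)/2) := by
    rw [show -((n:ℝ)+1)/2 = -(1:ℝ)/2 + -(n:ℝ)/2 by ring, Real.rpow_add h2π]
    congr 1
    rw [show (-(1:ℝ)/2) = -(1/2 : ℝ) by ring, Real.rpow_neg h2π.le, Real.sqrt_eq_rpow]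
  push_cast
  rw [hc]
  rw [show -(x*x + u ⬝ᵥ u)/2 = (-(x-0)^2/(2*(1:ℝ≥0))) + (-(u ⬝ᵥ u)/2) by push_cast; ring,
    Real.exp_add]
  push_cast
  ring

lemma lintegral_stdPdf : ∀ n : ℕ, ∫⁻ u, stdPdfE n u ∂(volume : Measure (Fin n → ℝ)) = 1 := by
  intro n
  induction n with
  | zero =>
    have : ∀ u : Fin 0 → ℝ, stdPdfE 0 u = 1 := by
      intro u
      unfold stdPdfE stdPdfR
      norm_num [dotProduct]
    simp_rw [this]
    rw [lintegral_one, volume_pi, Measure.pi_univ]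
    simp
  | succ n ih =>
    rw [lintegral_pi_succ n _ (measurable_stdPdfE _)]
    have : ∀ p : ℝ × (Fin n → ℝ), stdPdfE (n+1) (Fin.cons p.1 p.2)
        = ENNReal.ofReal (gaussianPDFReal 0 1 p.1) * stdPdfE n p.2 := by
      intro p
      unfold stdPdfE
      rw [stdPdfR_cons, ENNReal.ofReal_mul (gaussianPDFReal_nonneg _ _ _)]
    simp_rw [this]
    rw [lintegral_prod _ (by
      apply Measurable.aemeasurable
      exact ((measurable_gaussianPDFReal 0 1).comp measurable_fst).ennreal_ofReal.mul
        ((measurable_stdPdfE n).comp measurable_snd))]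
    simp_rw [lintegral_const_mul _ (measurable_stdPdfE n), ih, mul_one]
    exact lintegral_gaussianPDFReal_eq_one 0 one_ne_zero

lemma measurableSet_halfspace {n : ℕ} (b : Fin n → ℝ) (t : ℝ) :
    MeasurableSet {u : Fin n → ℝ | b ⬝ᵥ u ≤ t} :=
  measurableSet_le (measurable_dot b) measurable_const

lemma halfspace_lintegral : ∀ (n : ℕ) (b : Fin n → ℝ), b ≠ 0 → ∀ t : ℝ,
    ∫⁻ u in {u | b ⬝ᵥ u ≤ t}, stdPdfE n u ∂(volume : Measure (Fin n → ℝ))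
      = ENNReal.ofReal (stdNormalCDF (t / Real.sqrt (b ⬝ᵥ b))) := by
  intro n
  induction n with
  | zero =>
    intro b hb t
    exact absurd (funext fun i => i.elim0) hb
  | succ n ih =>
    intro b hb t
    set S : Set (ℝ × (Fin n → ℝ)) := {p | Fin.tail b ⬝ᵥ p.2 ≤ t - b 0 * p.1} with hS
    have hSmeas : MeasurableSet S := by
      apply measurableSet_le
      · exact (measurable_dot (Fin.tail b)).comp measurable_snd
      · fun_prop
    rw [← lintegral_indicator (measurableSet_halfspace b t)]
    rw [lintegral_pi_succ n _ ((measurable_stdPdfE _).indicator (measurableSet_halfspace b t))]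
    have key : ∀ p : ℝ × (Fin n → ℝ),
        ({u : Fin (n+1) → ℝ | b ⬝ᵥ u ≤ t}.indicator (stdPdfE (n+1))) (Fin.cons p.1 p.2)
        = ENNReal.ofReal (gaussianPDFReal 0 1 p.1)
          * (S.indicator (fun q : ℝ × (Fin n → ℝ) => stdPdfE n q.2) p) := by
      intro p
      have hmem : (Fin.cons p.1 p.2 ∈ {u : Fin (n+1) → ℝ | b ⬝ᵥ u ≤ t}) ↔ p ∈ S := by
        simp only [Set.mem_setOf_eq, dot_cons, hS]
        constructor <;> intro h <;> linarith
      by_cases h : Fin.cons p.1 p.2 ∈ {u : Fin (n+1) → ℝ | b ⬝ᵥ u ≤ t}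
      · rw [Set.indicator_of_mem h, Set.indicator_of_mem (hmem.1 h)]
        unfold stdPdfE
        rw [stdPdfR_cons, ENNReal.ofReal_mul (gaussianPDFReal_nonneg _ _ _)]
      · rw [Set.indicator_of_notMem h, Set.indicator_of_notMem (fun hc => h (hmem.2 hc)),
          mul_zero]
    simp_rw [key]
    rw [lintegral_prod _ (by
      apply Measurable.aemeasurable
      exact (((measurable_gaussianPDFReal 0 1).comp measurable_fst).ennreal_ofReal).mul
        (((measurable_stdPdfE n).comp measurable_snd).indicator hSmeas))]
    have hx : ∀ x : ℝ, ∫⁻ u' : Fin n → ℝ,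
        ENNReal.ofReal (gaussianPDFReal 0 1 x)
          * (S.indicator (fun q : ℝ × (Fin n → ℝ) => stdPdfE n q.2) (x, u')) ∂volume
        = ENNReal.ofReal (gaussianPDFReal 0 1 x)
          * ∫⁻ u' in {u' : Fin n → ℝ | Fin.tail b ⬝ᵥ u' ≤ t - b 0 * x}, stdPdfE n u' ∂volume := by
      intro x
      rw [lintegral_const_mul' _ _ ENNReal.ofReal_ne_top]
      congr 1
      rw [← lintegral_indicator (measurableSet_halfspace _ _)]
      refine lintegral_congr fun u' => ?_
      by_cases h : Fin.tail b ⬝ᵥ u' ≤ t - b 0 * x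
      · rw [Set.indicator_of_mem (show (x, u') ∈ S from h),
          Set.indicator_of_mem (show u' ∈ {u' : Fin n → ℝ | Fin.tail b ⬝ᵥ u' ≤ t - b 0 * x} from h)]
      · rw [Set.indicator_of_notMem (show (x, u') ∉ S from h),
          Set.indicator_of_notMem
            (show u' ∉ {u' : Fin n → ℝ | Fin.tail b ⬝ᵥ u' ≤ t - b 0 * x} from h)]
    simp_rw [hx]
    by_cases hb' : Fin.tail b = 0
    · -- tail is zero, head must be nonzero
      have hb0 : b 0 ≠ 0 := by
        intro h0
        apply hb
        funext i
        induction i using Fin.cases with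
        | zero => exact h0
        | succ i => exact congrFun hb' i
      have hdot : b ⬝ᵥ b = b 0 * b 0 := by
        conv_lhs => rw [← Fin.cons_self_tail b]
        rw [dot_cons, Fin.cons_zero, Fin.tail_cons, hb', dotProduct_zero, add_zero]
      have hset : ∀ x : ℝ, {u' : Fin n → ℝ | Fin.tail b ⬝ᵥ u' ≤ t - b 0 * x}
          = if b 0 * x ≤ t then Set.univ else (∅ : Set (Fin n → ℝ)) := by
        intro x
        split_ifs with hxt
        · refine Set.eq_univ_of_forall fun u' => ?_
          simp only [Set.mem_setOf_eq, hb', zero_dotProduct]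
          linarith
        · refine Set.eq_empty_of_forall_notMem fun u' hu' => ?_
          simp only [Set.mem_setOf_eq, hb', zero_dotProduct] at hu'
          exact hxt (by linarith)
      have hval : ∀ x : ℝ, ENNReal.ofReal (gaussianPDFReal 0 1 x)
            * ∫⁻ u' in {u' : Fin n → ℝ | Fin.tail b ⬝ᵥ u' ≤ t - b 0 * x}, stdPdfE n u' ∂volume
          = ({x : ℝ | b 0 * x ≤ t}.indicator
              (fun x => ENNReal.ofReal (gaussianPDFReal 0 1 x)) x) := by
        intro x
        rw [hset x]
        split_ifs with hxt
        · rw [Measure.restrict_univ, lintegral_stdPdf n, mul_one,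
            Set.indicator_of_mem (by exact hxt)]
        · rw [Measure.restrict_empty, lintegral_zero_measure, mul_zero,
            Set.indicator_of_notMem (by exact hxt)]
      simp_rw [hval]
      rw [lintegral_indicator (measurableSet_le (by fun_prop) measurable_const)]
      have hgr : ∫⁻ x in {x : ℝ | b 0 * x ≤ t}, ENNReal.ofReal (gaussianPDFReal 0 1 x) ∂volume
          = gaussianReal 0 1 {x : ℝ | b 0 * x ≤ t} := by
        rw [gaussianReal_of_var_ne_zero _ one_ne_zero,
          withDensity_apply _ (measurableSet_le (by fun_prop) measurable_const)]
        rfl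
      rw [hgr]
      rcases lt_or_gt_of_ne hb0 with hneg | hpos
      · have : {x : ℝ | b 0 * x ≤ t} = Set.Ici (t / b 0) := by
          ext x
          simp only [Set.mem_setOf_eq, Set.mem_Ici, div_le_iff_of_neg hneg]
          constructor <;> intro h <;> linarith [h]
        rw [this, gaussianReal01_Ici]
        congr 2
        rw [hdot, Real.sqrt_mul_self_eq_abs, abs_of_neg hneg, div_neg]
      · have : {x : ℝ | b 0 * x ≤ t} = Set.Iic (t / b 0) := by
          ext x
          simp only [Set.mem_setOf_eq, Set.mem_Iic, le_div_iff₀ hpos]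
          constructor <;> intro h <;> linarith
        rw [this, gaussianReal01_Iic]
        congr 2
        rw [hdot, Real.sqrt_mul_self_eq_abs, abs_of_pos hpos]
    · -- tail nonzero: use IH and the convolution lemma
      have hq' : 0 < Fin.tail b ⬝ᵥ Fin.tail b := dotProduct_self_pos hb'
      have hs' : 0 < Real.sqrt (Fin.tail b ⬝ᵥ Fin.tail b) := Real.sqrt_pos.2 hq'
      have hIH : ∀ x : ℝ,
          ∫⁻ u' in {u' : Fin n → ℝ | Fin.tail b ⬝ᵥ u' ≤ t - b 0 * x}, stdPdfE n u' ∂volume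
          = ENNReal.ofReal (stdNormalCDF ((t - b 0 * x) / Real.sqrt (Fin.tail b ⬝ᵥ Fin.tail b))) :=
        fun x => ih (Fin.tail b) hb' (t - b 0 * x)
      simp_rw [hIH]
      rw [lintegral_gaussianPDF_mul_cdf hs' (b 0) t]
      congr 3
      rw [Real.sq_sqrt hq'.le]
      conv_rhs => rw [← Fin.cons_self_tail b]
      rw [dot_cons, Fin.cons_zero, Fin.tail_cons]
      ring

noncomputable def stdGauss (n : ℕ) : Measure (Fin n → ℝ) :=
  (volume : Measure (Fin n → ℝ)).withDensity (stdPdfE n)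

instance stdGauss_prob (n : ℕ) : IsProbabilityMeasure (stdGauss n) :=
  ⟨by rw [stdGauss, withDensity_apply _ MeasurableSet.univ, Measure.restrict_univ,
      lintegral_stdPdf n]⟩

lemma map_dot_stdGauss {n : ℕ} {b : Fin n → ℝ} (hb : b ≠ 0) :
    Measure.map (fun u => b ⬝ᵥ u) (stdGauss n)
      = gaussianReal 0 ⟨b ⬝ᵥ b, dotProduct_self_nonneg b⟩ := by
  have hq : 0 < b ⬝ᵥ b := dotProduct_self_pos hb
  haveI : IsProbabilityMeasure (Measure.map (fun u => b ⬝ᵥ u) (stdGauss n)) :=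
    Measure.isProbabilityMeasure_map (measurable_dot b).aemeasurable
  refine Measure.ext_of_Iic _ _ fun t => ?_
  rw [Measure.map_apply (measurable_dot b) measurableSet_Iic]
  have hpre : (fun u => b ⬝ᵥ u) ⁻¹' Set.Iic t = {u | b ⬝ᵥ u ≤ t} := rfl
  rw [hpre, stdGauss, withDensity_apply _ (measurableSet_halfspace b t),
    halfspace_lintegral n b hb t]
  have hcoe : (⟨b ⬝ᵥ b, dotProduct_self_nonneg b⟩ : ℝ≥0)
      = ⟨(Real.sqrt (b ⬝ᵥ b))^2, sq_nonneg _⟩ := by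
    ext; simp [Real.sq_sqrt (dotProduct_self_nonneg b)]
  rw [hcoe, gaussianReal_Iic 0 (Real.sqrt_pos.2 hq) t, sub_zero]

lemma stdGauss_halfspace_le {n : ℕ} {b : Fin n → ℝ} (hb : b ≠ 0) (t : ℝ) :
    stdGauss n {u | b ⬝ᵥ u ≤ t} = ENNReal.ofReal (stdNormalCDF (t / Real.sqrt (b ⬝ᵥ b))) := by
  rw [stdGauss, withDensity_apply _ (measurableSet_halfspace b t)]
  exact halfspace_lintegral n b hb t

lemma stdGauss_halfspace_lt {n : ℕ} {b : Fin n → ℝ} (hb : b ≠ 0) (t : ℝ) :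
    stdGauss n {u | b ⬝ᵥ u < t} = ENNReal.ofReal (stdNormalCDF (t / Real.sqrt (b ⬝ᵥ b))) := by
  have hq : 0 < b ⬝ᵥ b := dotProduct_self_pos hb
  have h1 : stdGauss n {u | b ⬝ᵥ u < t}
      = Measure.map (fun u => b ⬝ᵥ u) (stdGauss n) (Set.Iio t) := by
    rw [Measure.map_apply (measurable_dot b) measurableSet_Iio]; rfl
  have hcoe : (⟨b ⬝ᵥ b, dotProduct_self_nonneg b⟩ : ℝ≥0)
      = ⟨(Real.sqrt (b ⬝ᵥ b))^2, sq_nonneg _⟩ := by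
    ext; simp [Real.sq_sqrt (dotProduct_self_nonneg b)]
  rw [h1, map_dot_stdGauss hb, hcoe, gaussianReal_Iio 0 (Real.sqrt_pos.2 hq) t, sub_zero]

lemma stdGauss_halfspace_ge {n : ℕ} {b : Fin n → ℝ} (hb : b ≠ 0) (t : ℝ) :
    stdGauss n {u | t ≤ b ⬝ᵥ u} = ENNReal.ofReal (stdNormalCDF (-(t / Real.sqrt (b ⬝ᵥ b)))) := by
  have hq : 0 < b ⬝ᵥ b := dotProduct_self_pos hb
  have h1 : stdGauss n {u | t ≤ b ⬝ᵥ u}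
      = Measure.map (fun u => b ⬝ᵥ u) (stdGauss n) (Set.Ici t) := by
    rw [Measure.map_apply (measurable_dot b) measurableSet_Ici]; rfl
  have hcoe : (⟨b ⬝ᵥ b, dotProduct_self_nonneg b⟩ : ℝ≥0)
      = ⟨(Real.sqrt (b ⬝ᵥ b))^2, sq_nonneg _⟩ := by
    ext; simp [Real.sq_sqrt (dotProduct_self_nonneg b)]
  rw [h1, map_dot_stdGauss hb, hcoe, gaussianReal_Ici 0 (Real.sqrt_pos.2 hq) t, sub_zero]







lemma dot_mulVec_symm {d : ℕ} (A : Matrix (Fin d) (Fin d) ℝ) (v w : Fin d → ℝ) :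
    (A *ᵥ v) ⬝ᵥ w = v ⬝ᵥ (Aᵀ *ᵥ w) := by
  rw [dotProduct_comm, dotProduct_mulVec, dotProduct_comm, mulVec_transpose]

lemma measurable_mulVec {d : ℕ} (A : Matrix (Fin d) (Fin d) ℝ) :
    Measurable (fun u : Fin d → ℝ => A *ᵥ u) := by
  unfold mulVec dotProduct; fun_prop

lemma measurable_mvGaussianPdf {d : ℕ} (S : Matrix (Fin d) (Fin d) ℝ) :
    Measurable (mvGaussianPdf 0 S) := by
  unfold mvGaussianPdf mulVec
  unfold dotProduct
  fun_prop

lemma mvGaussianPdf_pos {d : ℕ} {S : Matrix (Fin d) (Fin d) ℝ} (hS : S.PosDef)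
    (x : Fin d → ℝ) : 0 < mvGaussianPdf 0 S x := by
  unfold mvGaussianPdf
  have h1 : (0:ℝ) < 2 * Real.pi := by positivity
  have h2 : (0:ℝ) < S.det := hS.det_pos
  positivity

/-- main splitting computation over the standard Gaussian -/
lemma min_split (n : ℕ) (b : Fin n → ℝ) (hb : b ≠ 0) :
    ∫⁻ u, ENNReal.ofReal (min (stdPdfR n u) (stdPdfR n (u + b))) ∂(volume : Measure (Fin n → ℝ))
      = ENNReal.ofReal (2 * stdNormalCDF (-(Real.sqrt (b ⬝ᵥ b) / 2))) := by
  have hq : 0 < b ⬝ᵥ b := dotProduct_self_pos hb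
  have hC : (0:ℝ) < (2*π)^(-(n:ℝ)/2) := by positivity
  have hexp : ∀ u : Fin n → ℝ, (u + b) ⬝ᵥ (u + b) = u ⬝ᵥ u + 2*(b ⬝ᵥ u) + b ⬝ᵥ b := by
    intro u
    rw [add_dotProduct, dotProduct_add, dotProduct_add, dotProduct_comm u b]
    ring
  have hmono : ∀ u v : Fin n → ℝ, u ⬝ᵥ u ≤ v ⬝ᵥ v → stdPdfR n v ≤ stdPdfR n u := by
    intro u v h
    unfold stdPdfR
    apply mul_le_mul_of_nonneg_left _ hC.le
    apply Real.exp_le_exp.2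
    linarith
  have hsplit : ∀ u : Fin n → ℝ, ENNReal.ofReal (min (stdPdfR n u) (stdPdfR n (u + b)))
      = ({u : Fin n → ℝ | -(b ⬝ᵥ b)/2 ≤ b ⬝ᵥ u}.indicator (fun u => stdPdfE n (u + b)) u)
        + ({u : Fin n → ℝ | b ⬝ᵥ u < -(b ⬝ᵥ b)/2}.indicator (stdPdfE n) u) := by
    intro u
    by_cases h : -(b ⬝ᵥ b)/2 ≤ b ⬝ᵥ u
    · rw [Set.indicator_of_mem (show u ∈ _ from h),
        Set.indicator_of_notMem (show u ∉ {u : Fin n → ℝ | b ⬝ᵥ u < -(b ⬝ᵥ b)/2} from not_lt.2 h),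
        add_zero, min_eq_right (hmono u (u+b) (by rw [hexp]; linarith))]
      rfl
    · push_neg at h
      rw [Set.indicator_of_notMem (show u ∉ {u : Fin n → ℝ | -(b ⬝ᵥ b)/2 ≤ b ⬝ᵥ u} from not_le.2 h),
        Set.indicator_of_mem (show u ∈ {u : Fin n → ℝ | b ⬝ᵥ u < -(b ⬝ᵥ b)/2} from h),
        zero_add, min_eq_left (hmono (u+b) u (by rw [hexp]; nlinarith))]
      rfl
  simp_rw [hsplit]
  have hsetA : MeasurableSet {u : Fin n → ℝ | -(b ⬝ᵥ b)/2 ≤ b ⬝ᵥ u} :=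
    measurableSet_le measurable_const (measurable_dot b)
  have hsetB : MeasurableSet {u : Fin n → ℝ | b ⬝ᵥ u < -(b ⬝ᵥ b)/2} :=
    measurableSet_lt (measurable_dot b) measurable_const
  have hmA : Measurable (fun u : Fin n → ℝ => stdPdfE n (u + b)) :=
    (measurable_stdPdfE n).comp (by fun_prop)
  rw [lintegral_add_left (hmA.indicator hsetA)]
  -- second term
  have hterm2 : ∫⁻ u, ({u : Fin n → ℝ | b ⬝ᵥ u < -(b ⬝ᵥ b)/2}.indicator (stdPdfE n) u) ∂volume
      = ENNReal.ofReal (stdNormalCDF (-(Real.sqrt (b ⬝ᵥ b)/2))) := by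
    rw [lintegral_indicator hsetB]
    have := stdGauss_halfspace_lt hb (-(b ⬝ᵥ b)/2)
    rw [stdGauss, withDensity_apply _ hsetB] at this
    rw [this]
    congr 2
    rw [neg_div, neg_div, div_right_comm, Real.div_sqrt]
  -- first term : translate
  have hterm1 : ∫⁻ u, ({u : Fin n → ℝ | -(b ⬝ᵥ b)/2 ≤ b ⬝ᵥ u}.indicator
        (fun u => stdPdfE n (u + b)) u) ∂volume
      = ENNReal.ofReal (stdNormalCDF (-(Real.sqrt (b ⬝ᵥ b)/2))) := by
    have hpt : ∀ u : Fin n → ℝ, ({u : Fin n → ℝ | -(b ⬝ᵥ b)/2 ≤ b ⬝ᵥ u}.indicator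
          (fun u => stdPdfE n (u + b)) u)
        = ({w : Fin n → ℝ | (b ⬝ᵥ b)/2 ≤ b ⬝ᵥ w}.indicator (stdPdfE n)) (u + b) := by
      intro u
      have hmemiff : (-(b ⬝ᵥ b)/2 ≤ b ⬝ᵥ u) ↔ ((b ⬝ᵥ b)/2 ≤ b ⬝ᵥ (u + b)) := by
        rw [dotProduct_add]
        constructor <;> intro h <;> linarith
      by_cases h : -(b ⬝ᵥ b)/2 ≤ b ⬝ᵥ u
      · rw [Set.indicator_of_mem (show u ∈ _ from h),
          Set.indicator_of_mem (show u + b ∈ {w : Fin n → ℝ | (b ⬝ᵥ b)/2 ≤ b ⬝ᵥ w} from hmemiff.1 h)]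
      · rw [Set.indicator_of_notMem (show u ∉ _ from h),
          Set.indicator_of_notMem
            (show u + b ∉ {w : Fin n → ℝ | (b ⬝ᵥ b)/2 ≤ b ⬝ᵥ w} from fun hc => h (hmemiff.2 hc))]
    simp_rw [hpt]
    rw [lintegral_add_right_eq_self
      (({w : Fin n → ℝ | (b ⬝ᵥ b)/2 ≤ b ⬝ᵥ w}.indicator (stdPdfE n))) b]
    rw [lintegral_indicator (measurableSet_le measurable_const (measurable_dot b))]
    have := stdGauss_halfspace_ge hb ((b ⬝ᵥ b)/2)
    rw [stdGauss, withDensity_apply _ (measurableSet_le measurable_const (measurable_dot b))] at this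
    rw [this]
    congr 3
    rw [div_right_comm, Real.div_sqrt]
  rw [hterm1, hterm2, ← ENNReal.ofReal_add (stdNormalCDF_nonneg _) (stdNormalCDF_nonneg _)]
  congr 1
  ring

lemma inner_lintegral {d : ℕ} {S : Matrix (Fin d) (Fin d) ℝ} (hS : S.PosDef)
    {lam : ℝ} (hlam : 0 < lam) {e : Fin d → ℝ} (he : e ≠ 0) :
    ∫⁻ z, ENNReal.ofReal (min (mvGaussianPdf 0 S z) (mvGaussianPdf 0 S (z + lam • e)))
        ∂(volume : Measure (Fin d → ℝ))
      = ENNReal.ofReal (2 * stdNormalCDF (-(lam * Real.sqrt (quadForm S⁻¹ e) / 2))) := by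
  classical
  set A := CFC.sqrt S with hA
  have hAS : A * A = S := CFC.sqrt_mul_sqrt_self S hS.posSemidef.nonneg
  have hAH : Aᵀ = A := by
    have h := (CFC.sqrt_nonneg S).posSemidef.1
    rwa [Matrix.IsHermitian, conjTranspose_eq_transpose_of_trivial] at h
  have hdetS : 0 < S.det := hS.det_pos
  have hdetA2 : A.det * A.det = S.det := by rw [← det_mul, hAS]
  have hdetA : A.det ≠ 0 := by
    intro h0; rw [h0, zero_mul] at hdetA2; exact hdetS.ne hdetA2
  have hAunit : IsUnit A.det := hdetA.isUnit
  have hSinv : S⁻¹ = A⁻¹ * A⁻¹ := by rw [← hAS, Matrix.mul_inv_rev]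
  have hAAinv : A * A⁻¹ = 1 := Matrix.mul_nonsing_inv A hAunit
  have hAinvA : A⁻¹ * A = 1 := Matrix.nonsing_inv_mul A hAunit
  -- the quadratic form identity
  have hquad : ∀ v : Fin d → ℝ, (A *ᵥ v) ⬝ᵥ (S⁻¹ *ᵥ (A *ᵥ v)) = v ⬝ᵥ v := by
    intro v
    rw [mulVec_mulVec, dot_mulVec_symm, mulVec_mulVec, hAH, show A * (S⁻¹ * A) = 1 by
      rw [hSinv, ← Matrix.mul_assoc, ← Matrix.mul_assoc, hAAinv, Matrix.one_mul, hAinvA],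
      one_mulVec]
  set b : Fin d → ℝ := lam • (A⁻¹ *ᵥ e) with hbdef
  have hAinvE : A *ᵥ (A⁻¹ *ᵥ e) = e := by rw [mulVec_mulVec, hAAinv, one_mulVec]
  have hbne : b ≠ 0 := by
    intro h0
    rcases smul_eq_zero.1 h0 with h | h
    · exact hlam.ne' h
    · apply he; rw [← hAinvE, h, mulVec_zero]
  have hbb : b ⬝ᵥ b = lam^2 * quadForm S⁻¹ e := by
    rw [hbdef, smul_dotProduct, dotProduct_smul, smul_eq_mul, smul_eq_mul]
    have : (A⁻¹ *ᵥ e) ⬝ᵥ (A⁻¹ *ᵥ e) = e ⬝ᵥ (S⁻¹ *ᵥ e) := by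
      rw [dot_mulVec_symm, mulVec_mulVec, Matrix.transpose_nonsing_inv, hAH, ← hSinv]
    rw [this, quadForm]
    ring
  -- pdf at A *ᵥ u
  have hpdfA : ∀ u : Fin d → ℝ, mvGaussianPdf 0 S (A *ᵥ u)
      = S.det ^ (-(1:ℝ)/2) * stdPdfR d u := by
    intro u
    unfold mvGaussianPdf stdPdfR
    rw [sub_zero, hquad]
    ring
  have hshift : ∀ u : Fin d → ℝ, A *ᵥ u + lam • e = A *ᵥ (u + b) := by
    intro u
    rw [mulVec_add, hbdef, mulVec_smul, hAinvE]
  -- change of variables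
  have hmap := Real.map_matrix_volume_pi_eq_smul_volume_pi (M := A) hdetA
  set f : (Fin d → ℝ) → ℝ≥0∞ :=
    fun z => ENNReal.ofReal (min (mvGaussianPdf 0 S z) (mvGaussianPdf 0 S (z + lam • e))) with hf
  have hfm : Measurable f := by
    apply Measurable.ennreal_ofReal
    exact ((measurable_mvGaussianPdf S).min ((measurable_mvGaussianPdf S).comp (by fun_prop)))
  have hcoe : ⇑(toLin' A) = (fun u : Fin d → ℝ => A *ᵥ u) :=
    funext fun u => Matrix.toLin'_apply A u
  rw [hcoe] at hmap
  have hcv : ∫⁻ u, f (A *ᵥ u) ∂volume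
      = ENNReal.ofReal |A.det|⁻¹ * ∫⁻ z, f z ∂volume := by
    rw [← lintegral_map hfm (measurable_mulVec A), hmap, lintegral_smul_measure, abs_inv, smul_eq_mul]
  have hXeq : ∫⁻ z, f z ∂volume = ENNReal.ofReal |A.det| * ∫⁻ u, f (A *ᵥ u) ∂volume := by
    rw [hcv, ← mul_assoc, ← ENNReal.ofReal_mul (abs_nonneg _),
      mul_inv_cancel₀ (abs_ne_zero.2 hdetA), ENNReal.ofReal_one, one_mul]
  rw [hXeq]
  -- simplify f (A *ᵥ u)
  have hfA : ∀ u : Fin d → ℝ, f (A *ᵥ u)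
      = ENNReal.ofReal (S.det ^ (-(1:ℝ)/2))
        * ENNReal.ofReal (min (stdPdfR d u) (stdPdfR d (u + b))) := by
    intro u
    rw [hf]
    simp only
    rw [hshift u, hpdfA, hpdfA, ← mul_min_of_nonneg _ _ (by positivity : (0:ℝ) ≤ S.det ^ (-(1:ℝ)/2)),
      ENNReal.ofReal_mul (by positivity)]
  simp_rw [hfA]
  rw [lintegral_const_mul' _ _ ENNReal.ofReal_ne_top, ← mul_assoc,
    ← ENNReal.ofReal_mul (abs_nonneg _)]
  have habs : |A.det| * S.det ^ (-(1:ℝ)/2) = 1 := by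
    have h1 : |A.det| = Real.sqrt S.det := by
      rw [← hdetA2, ← abs_mul_abs_self, Real.sqrt_mul_self (abs_nonneg _)]
    have h2 : S.det ^ (-(1:ℝ)/2) = (Real.sqrt S.det)⁻¹ := by
      rw [show (-(1:ℝ)/2) = -(1/2 : ℝ) by ring, Real.rpow_neg hdetS.le, Real.sqrt_eq_rpow]
    rw [h1, h2, mul_inv_cancel₀ (Real.sqrt_ne_zero'.2 hdetS)]
  rw [habs, ENNReal.ofReal_one, one_mul, min_split d b hbne]
  congr 3
  rw [hbb, Real.sqrt_mul (sq_nonneg lam), Real.sqrt_sq hlam.le, mul_div_assoc]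

lemma stdNormalCDF_mono : Monotone stdNormalCDF := fun a b hab =>
  ENNReal.toReal_mono (measure_ne_top _ _) (measure_mono (Set.Iic_subset_Iic.2 hab))

lemma measurable_stdNormalCDF : Measurable stdNormalCDF := stdNormalCDF_mono.measurable

lemma measurable_quadForm {d : ℕ} (M : Matrix (Fin d) (Fin d) ℝ) :
    Measurable (fun v : Fin d → ℝ => quadForm M v) := by
  unfold quadForm mulVec
  unfold dotProduct
  fun_prop

lemma quadForm_nonneg {d : ℕ} {S : Matrix (Fin d) (Fin d) ℝ} (hS : S.PosDef)
    (v : Fin d → ℝ) : 0 ≤ quadForm S⁻¹ v := by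
  have h := (hS.inv).posSemidef.dotProduct_mulVec_nonneg v
  rwa [star_trivial] at h

lemma quadForm_smul {d : ℕ} (M : Matrix (Fin d) (Fin d) ℝ) (c : ℝ) (v : Fin d → ℝ) :
    quadForm M (c • v) = c^2 * quadForm M v := by
  unfold quadForm
  rw [mulVec_smul, smul_dotProduct, dotProduct_smul, smul_eq_mul, smul_eq_mul]
  ring


end AuxESJD

/-- ESJD formula for RWM at stationarity, centered Gaussian target with covariance `S`,
identity proposal matrix: with `Z' = Z + λ ε`,
`E[‖Z' − Z‖²_{Σ⁻¹} min{1, φ(Z';0,Σ)/φ(Z;0,Σ)}] = 2λ² E[‖ε‖²_{Σ⁻¹} Φ(−λ‖ε‖_{Σ⁻¹}/2)]`. -/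
theorem esjd_identity_proposal {d : ℕ} (hd : 1 ≤ d)
    (S : Matrix (Fin d) (Fin d) ℝ) (hS : S.PosDef)
    (lam : ℝ) (hlam : 0 < lam)
    {Ω : Type*} [MeasureSpace Ω] [IsProbabilityMeasure (ℙ : Measure Ω)]
    (Z ε : Ω → (Fin d → ℝ)) (hZm : Measurable Z) (hεm : Measurable ε)
    (hZ : Measure.map Z ℙ = mvGaussian 0 S)
    (hε : Measure.map ε ℙ = mvGaussian 0 1)
    (hindep : IndepFun Z ε ℙ)
    (Z' : Ω → (Fin d → ℝ)) (hZ' : Z' = fun ω => Z ω + lam • ε ω) :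
    ∫ ω, quadForm S⁻¹ (Z' ω - Z ω) *
        min 1 (mvGaussianPdf 0 S (Z' ω) / mvGaussianPdf 0 S (Z ω)) ∂ℙ
      = 2 * lam ^ 2 *
        ∫ ω, quadForm S⁻¹ (ε ω) *
          stdNormalCDF (-(lam * Real.sqrt (quadForm S⁻¹ (ε ω)) / 2)) ∂ℙ := by
  subst hZ'
  haveI hPS : IsProbabilityMeasure (mvGaussian 0 S) := by
    rw [← hZ]; exact Measure.isProbabilityMeasure_map hZm.aemeasurable
  haveI hP1 : IsProbabilityMeasure (mvGaussian (0 : Fin d → ℝ) 1) := by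
    rw [← hε]; exact Measure.isProbabilityMeasure_map hεm.aemeasurable
  set G : (Fin d → ℝ) × (Fin d → ℝ) → ℝ := fun p =>
    quadForm S⁻¹ (lam • p.2) * min 1 (mvGaussianPdf 0 S (p.1 + lam • p.2) / mvGaussianPdf 0 S p.1)
    with hGdef
  have hGm : Measurable G := by
    apply Measurable.mul
    · exact (measurable_quadForm S⁻¹).comp (measurable_snd.const_smul lam)
    · apply Measurable.min measurable_const
      apply Measurable.div
      · exact (measurable_mvGaussianPdf S).comp (measurable_fst.add (measurable_snd.const_smul lam))
      · exact (measurable_mvGaussianPdf S).comp measurable_fst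
  have hGnonneg : ∀ p, 0 ≤ G p := by
    intro p
    apply mul_nonneg (quadForm_nonneg hS _)
    exact le_min zero_le_one (div_nonneg (mvGaussianPdf_pos hS _).le (mvGaussianPdf_pos hS _).le)
  set h : (Fin d → ℝ) → ℝ := fun e =>
    quadForm S⁻¹ e * stdNormalCDF (-(lam * Real.sqrt (quadForm S⁻¹ e) / 2)) with hhdef
  have hhm : Measurable h := by
    apply Measurable.mul (measurable_quadForm S⁻¹)
    exact measurable_stdNormalCDF.comp (by
      apply Measurable.neg
      apply Measurable.div_const
      exact ((measurable_quadForm S⁻¹).sqrt).const_mul lam)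
  have hhnonneg : ∀ e, 0 ≤ h e :=
    fun e => mul_nonneg (quadForm_nonneg hS e) (stdNormalCDF_nonneg _)
  -- LHS as integral over product measure
  have hprod : Measure.map (fun ω => (Z ω, ε ω)) ℙ = (mvGaussian 0 S).prod (mvGaussian 0 1) := by
    rw [← hZ, ← hε]
    exact (indepFun_iff_map_prod_eq_prod_map_map hZm.aemeasurable hεm.aemeasurable).1 hindep
  have hL1 : ∫ ω, quadForm S⁻¹ ((fun ω => Z ω + lam • ε ω) ω - Z ω) *
        min 1 (mvGaussianPdf 0 S ((fun ω => Z ω + lam • ε ω) ω) / mvGaussianPdf 0 S (Z ω)) ∂ℙ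
      = ∫ ω, G (Z ω, ε ω) ∂ℙ := by
    refine integral_congr_ae (ae_of_all _ fun ω => ?_)
    simp only [hGdef, add_sub_cancel_left]
  have hL2 : ∫ ω, G (Z ω, ε ω) ∂ℙ = ∫ p, G p ∂((mvGaussian 0 S).prod (mvGaussian 0 1)) := by
    rw [← hprod, integral_map (hZm.prodMk hεm).aemeasurable hGm.aestronglyMeasurable]
  -- pass to lintegral
  have hL3 : ∫ p, G p ∂((mvGaussian 0 S).prod (mvGaussian 0 1))
      = (∫⁻ p, ENNReal.ofReal (G p) ∂((mvGaussian 0 S).prod (mvGaussian 0 1))).toReal := by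
    rw [integral_eq_lintegral_of_nonneg_ae (ae_of_all _ hGnonneg) hGm.aestronglyMeasurable]
  have hL4 : ∫⁻ p, ENNReal.ofReal (G p) ∂((mvGaussian 0 S).prod (mvGaussian 0 1))
      = ∫⁻ e, ∫⁻ z, ENNReal.ofReal (G (z, e)) ∂(mvGaussian 0 S) ∂(mvGaussian 0 1) :=
    lintegral_prod_symm _ (hGm.ennreal_ofReal.aemeasurable)
  -- inner integral evaluation
  have hclaim : ∀ e : Fin d → ℝ, ∫⁻ z, ENNReal.ofReal (G (z, e)) ∂(mvGaussian 0 S)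
      = ENNReal.ofReal (2 * lam^2 * h e) := by
    intro e
    by_cases he : e = 0
    · subst he
      have hq0 : quadForm S⁻¹ ((0:Fin d → ℝ)) = 0 := by
        unfold quadForm; rw [mulVec_zero, dotProduct_zero]
      have : ∀ z, G (z, 0) = 0 := by
        intro z
        simp only [hGdef, smul_zero, hq0, zero_mul]
      simp_rw [this]
      simp [hhdef, hq0]
    · have hKnn : 0 ≤ lam^2 * quadForm S⁻¹ e :=
        mul_nonneg (sq_nonneg lam) (quadForm_nonneg hS e)
      have hGze : ∀ z, ENNReal.ofReal (G (z, e))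
          = ENNReal.ofReal (lam^2 * quadForm S⁻¹ e)
            * ENNReal.ofReal (min 1 (mvGaussianPdf 0 S (z + lam • e) / mvGaussianPdf 0 S z)) := by
        intro z
        rw [hGdef]
        simp only
        rw [quadForm_smul, ENNReal.ofReal_mul hKnn]
      simp_rw [hGze]
      rw [lintegral_const_mul' _ _ ENNReal.ofReal_ne_top]
      rw [mvGaussian, lintegral_withDensity_eq_lintegral_mul _
        ((measurable_mvGaussianPdf S).ennreal_ofReal) (by
          apply Measurable.ennreal_ofReal
          apply Measurable.min measurable_const
          apply Measurable.div
          · exact (measurable_mvGaussianPdf S).comp (by fun_prop)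
          · exact measurable_mvGaussianPdf S)]
      have hptw : ∀ z : Fin d → ℝ,
          ENNReal.ofReal (mvGaussianPdf 0 S z)
            * ENNReal.ofReal (min 1 (mvGaussianPdf 0 S (z + lam • e) / mvGaussianPdf 0 S z))
          = ENNReal.ofReal (min (mvGaussianPdf 0 S z) (mvGaussianPdf 0 S (z + lam • e))) := by
        intro z
        rw [← ENNReal.ofReal_mul (mvGaussianPdf_pos hS z).le]
        congr 1
        rw [mul_min_of_nonneg _ _ (mvGaussianPdf_pos hS z).le, mul_one, mul_comm,
          div_mul_cancel₀ _ (mvGaussianPdf_pos hS z).ne']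
      simp only [Pi.mul_apply]
      rw [lintegral_congr hptw, inner_lintegral hS hlam he, ← ENNReal.ofReal_mul hKnn]
      congr 1
      rw [hhdef]
      ring
  simp_rw [hL1, hL2, hL3, hL4, hclaim]
  -- now the RHS
  have hR1 : ∫ ω, quadForm S⁻¹ (ε ω) *
        stdNormalCDF (-(lam * Real.sqrt (quadForm S⁻¹ (ε ω)) / 2)) ∂ℙ
      = ∫ e, h e ∂(mvGaussian 0 1) := by
    rw [← hε, integral_map hεm.aemeasurable hhm.aestronglyMeasurable]
  have hR2 : ∫ e, h e ∂(mvGaussian (0 : Fin d → ℝ) 1)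
      = (∫⁻ e, ENNReal.ofReal (h e) ∂(mvGaussian 0 1)).toReal := by
    rw [integral_eq_lintegral_of_nonneg_ae (ae_of_all _ hhnonneg) hhm.aestronglyMeasurable]
  rw [hR1, hR2]
  have hsplit : ∀ e : Fin d → ℝ, ENNReal.ofReal (2 * lam^2 * h e)
      = ENNReal.ofReal (2 * lam^2) * ENNReal.ofReal (h e) := fun e =>
    ENNReal.ofReal_mul (by positivity)
  simp_rw [hsplit]
  rw [lintegral_const_mul' _ _ ENNReal.ofReal_ne_top, ENNReal.toReal_mul,
    ENNReal.toReal_ofReal (by positivity)]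
end

section
/- Let X be a real random variable with X ~ N(−s²/2, s²), where s > 0. Then E[min{1, exp(X)}] = 2·Φ(−s/2). -/
open MeasureTheory ProbabilityTheory Real

open scoped NNReal ENNReal

lemma gaussianReal_map_affine (s μ : ℝ) (hs : 0 < s) :
    (gaussianReal 0 1).map (fun x => s * x + μ) = gaussianReal μ ⟨s ^ 2, sq_nonneg s⟩ := by
  have h1 : (gaussianReal 0 1).map (fun x => s * x) = gaussianReal 0 ⟨s ^ 2, sq_nonneg s⟩ := by
    have h := gaussianReal_map_const_mul (μ := 0) (v := 1) s
    simp only [mul_zero, mul_one] at h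
    exact h
  have hcomp : (fun x : ℝ => s * x + μ) = (fun x => x + μ) ∘ (fun x => s * x) := rfl
  rw [hcomp, ← Measure.map_map (by fun_prop) (by fun_prop), h1]
  have h2 := gaussianReal_map_add_const (μ := 0) (v := ⟨s ^ 2, sq_nonneg s⟩) μ
  simp only [zero_add] at h2
  exact h2

lemma gaussianReal_Ioi_toReal (a : ℝ) :
    ((gaussianReal 0 1) (Set.Ioi a)).toReal = stdNormalCDF (-a) := by
  have hone : NNReal.mk ((-1 : ℝ) ^ 2) (sq_nonneg _) * 1 = 1 := by
    ext; norm_num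
  have hmap : (gaussianReal 0 1).map (fun x : ℝ => (-1 : ℝ) * x) = gaussianReal 0 1 := by
    rw [show (fun x : ℝ => (-1 : ℝ) * x) = ((-1 : ℝ) * ·) from rfl,
      gaussianReal_map_const_mul, mul_zero, hone]
  have h0 : gaussianReal 0 1 ({a} : Set ℝ) = 0 :=
    gaussianReal_absolutelyContinuous 0 one_ne_zero (measure_singleton a)
  have hIci : gaussianReal 0 1 (Set.Ioi a) = gaussianReal 0 1 (Set.Ici a) := by
    rw [← Set.Ici_sdiff_left, measure_diff_null h0]
  rw [hIci, stdNormalCDF, ← hmap, Measure.map_apply (by fun_prop) measurableSet_Iic]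
  congr 2
  ext x
  simp only [Set.mem_preimage, Set.mem_Iic, Set.mem_Ici]
  constructor <;> intro h <;> linarith

lemma toReal_gaussianReal_Iic (s μ a : ℝ) (hs : 0 < s) :
    ((gaussianReal μ ⟨s ^ 2, sq_nonneg s⟩) (Set.Iic a)).toReal = stdNormalCDF ((a - μ) / s) := by
  rw [← gaussianReal_map_affine s μ hs, Measure.map_apply (by fun_prop) measurableSet_Iic]
  rw [show (fun x => s * x + μ) ⁻¹' Set.Iic a = Set.Iic ((a - μ) / s) by
    ext x
    simp only [Set.mem_preimage, Set.mem_Iic]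
    rw [le_div_iff₀ hs]
    constructor <;> intro h <;> nlinarith]
  rfl

lemma toReal_gaussianReal_Ioi (s μ a : ℝ) (hs : 0 < s) :
    ((gaussianReal μ ⟨s ^ 2, sq_nonneg s⟩) (Set.Ioi a)).toReal
      = stdNormalCDF (-((a - μ) / s)) := by
  rw [← gaussianReal_map_affine s μ hs, Measure.map_apply (by fun_prop) measurableSet_Ioi]
  rw [show (fun x => s * x + μ) ⁻¹' Set.Ioi a = Set.Ioi ((a - μ) / s) by
    ext x
    simp only [Set.mem_preimage, Set.mem_Ioi]
    rw [div_lt_iff₀ hs]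
    constructor <;> intro h <;> nlinarith]
  exact gaussianReal_Ioi_toReal _

lemma pdf_tilt (s : ℝ) (hs : 0 < s) (x : ℝ) :
    Real.exp x * gaussianPDFReal (-(s ^ 2) / 2) ⟨s ^ 2, sq_nonneg s⟩ x
      = gaussianPDFReal (s ^ 2 / 2) ⟨s ^ 2, sq_nonneg s⟩ x := by
  show Real.exp x * gaussianPDFReal (-(s ^ 2) / 2) (NNReal.mk (s ^ 2) (sq_nonneg s)) x
    = gaussianPDFReal (s ^ 2 / 2) (NNReal.mk (s ^ 2) (sq_nonneg s)) x
  simp only [gaussianPDFReal, NNReal.coe_mk]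
  rw [mul_comm (Real.exp x), mul_assoc, ← Real.exp_add]
  congr 1
  have h2 : (s : ℝ) ^ 2 ≠ 0 := by positivity
  field_simp
  ring

lemma setIntegral_gaussianReal_eq (μ : ℝ) {v : ℝ≥0} (hv : v ≠ 0) (g : ℝ → ℝ) {t : Set ℝ}
    (ht : MeasurableSet t) :
    ∫ x in t, g x ∂(gaussianReal μ v) = ∫ x in t, g x * gaussianPDFReal μ v x := by
  rw [gaussianReal_of_var_ne_zero _ hv]
  have hpdf : gaussianPDF μ v
      = fun x => (((gaussianPDFReal μ v x).toNNReal : ℝ≥0) : ℝ≥0∞) := by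
    ext x; rw [gaussianPDF, ENNReal.ofReal]
  rw [hpdf, setIntegral_withDensity_eq_setIntegral_smul
    ((measurable_gaussianPDFReal μ v).real_toNNReal) g ht]
  refine setIntegral_congr_fun ht fun x _ => ?_
  rw [NNReal.smul_def, smul_eq_mul, Real.coe_toNNReal _ (gaussianPDFReal_nonneg μ v x),
    mul_comm]

/-- For `X ∼ N(−s²/2, s²)` with `s > 0`, `E[min{1, exp X}] = 2 Φ(−s/2)`. -/
theorem integral_min_one_exp_gaussian_balanced
    {Ω : Type*} [MeasureSpace Ω] [IsProbabilityMeasure (ℙ : Measure Ω)]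
    (X : Ω → ℝ) (hXm : Measurable X) (s : ℝ) (hs : 0 < s)
    (hX : Measure.map X ℙ = gaussianReal (-(s ^ 2) / 2) ⟨s ^ 2, sq_nonneg s⟩) :
    ∫ ω, min 1 (Real.exp (X ω)) ∂ℙ = 2 * stdNormalCDF (-(s / 2)) := by
  set v : ℝ≥0 := ⟨s ^ 2, sq_nonneg s⟩ with hv_def
  have hv : v ≠ 0 := by
    intro h
    have : s ^ 2 = 0 := congrArg NNReal.toReal h
    nlinarith
  have hcont : Continuous fun x : ℝ => min 1 (Real.exp x) :=
    continuous_const.min Real.continuous_exp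
  have h1 : ∫ ω, min 1 (Real.exp (X ω)) ∂ℙ = ∫ x, min 1 (Real.exp x) ∂(gaussianReal (-(s ^ 2) / 2) v) := by
    rw [← hX]
    exact (integral_map hXm.aemeasurable hcont.aestronglyMeasurable).symm
  have hint : Integrable (fun x => min 1 (Real.exp x)) (gaussianReal (-(s ^ 2) / 2) v) := by
    refine Integrable.mono' (integrable_const (1 : ℝ)) hcont.aestronglyMeasurable ?_
    filter_upwards with x
    rw [Real.norm_eq_abs, abs_of_nonneg (le_min zero_le_one (Real.exp_pos x).le)]
    exact min_le_left _ _
  have hA : ∫ x in Set.Iic (0 : ℝ), min 1 (Real.exp x) ∂(gaussianReal (-(s ^ 2) / 2) v) = stdNormalCDF (-(s / 2)) := by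
    have e1 : ∫ x in Set.Iic (0 : ℝ), min 1 (Real.exp x) ∂(gaussianReal (-(s ^ 2) / 2) v)
        = ∫ x in Set.Iic (0 : ℝ), Real.exp x ∂(gaussianReal (-(s ^ 2) / 2) v) := by
      refine setIntegral_congr_fun measurableSet_Iic fun x hx => ?_
      exact min_eq_right (Real.exp_le_one_iff.mpr hx)
    rw [e1, setIntegral_gaussianReal_eq _ hv _ measurableSet_Iic]
    have e2 : ∫ x in Set.Iic (0 : ℝ), Real.exp x * gaussianPDFReal (-(s ^ 2) / 2) v x
        = ∫ x in Set.Iic (0 : ℝ), gaussianPDFReal (s ^ 2 / 2) v x := by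
      refine setIntegral_congr_fun measurableSet_Iic fun x _ => ?_
      exact pdf_tilt s hs x
    rw [e2]
    have e3 : gaussianReal (s ^ 2 / 2) v (Set.Iic 0)
        = ENNReal.ofReal (∫ x in Set.Iic (0 : ℝ), gaussianPDFReal (s ^ 2 / 2) v x) :=
      gaussianReal_apply_eq_integral _ hv _
    have e4 : ∫ x in Set.Iic (0 : ℝ), gaussianPDFReal (s ^ 2 / 2) v x
        = (gaussianReal (s ^ 2 / 2) v (Set.Iic 0)).toReal := by
      rw [e3, ENNReal.toReal_ofReal]
      exact setIntegral_nonneg measurableSet_Iic fun x _ => gaussianPDFReal_nonneg _ _ _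
    rw [e4, hv_def, toReal_gaussianReal_Iic s _ _ hs]
    congr 1
    rw [div_eq_iff hs.ne']
    ring
  have hB : ∫ x in (Set.Iic (0 : ℝ))ᶜ, min 1 (Real.exp x) ∂(gaussianReal (-(s ^ 2) / 2) v) = stdNormalCDF (-(s / 2)) := by
    rw [Set.compl_Iic]
    have e1 : ∫ x in Set.Ioi (0 : ℝ), min 1 (Real.exp x) ∂(gaussianReal (-(s ^ 2) / 2) v)
        = ∫ x in Set.Ioi (0 : ℝ), (1 : ℝ) ∂(gaussianReal (-(s ^ 2) / 2) v) := by
      refine setIntegral_congr_fun measurableSet_Ioi fun x hx => ?_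
      exact min_eq_left (Real.one_le_exp (le_of_lt hx))
    rw [e1, setIntegral_const, smul_eq_mul, mul_one, hv_def, measureReal_def,
      toReal_gaussianReal_Ioi s _ _ hs]
    congr 1
    rw [neg_inj, div_eq_iff hs.ne']
    ring
  rw [h1, ← integral_add_compl (measurableSet_Iic (a := (0 : ℝ))) hint, hA, hB]
  ring
end

section
/- Let d ≥ 1 and ℓ > 0. Let θ = (θ₁, ..., θ_d) be a random vector in ℝ^d, let ε = (ε₁, ..., ε_d) be an independent random vector with distribution N(0, I_d), and let ψ: ℝ → ℝ be a measurable function. Then E[min{1, exp((ℓ/√d) Σ_{i=1}^d ψ(θ_i) ε_i − (ℓ²/(2d)) Σ_{i=1}^d ψ(θ_i)²)}] = 2 · E[Φ(−(ℓ/2)·√((1/d) Σ_{i=1}^d ψ(θ_i)²))]. (Closed-form for the expected acceptance probability in the Roberts–Gelman–Gilks framework, obtained by conditioning on θ, since given θ the exponent is Gaussian with mean −s²/2 and variance s² where s² = (ℓ²/d) Σ ψ(θ_i)².) -/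
open MeasureTheory ProbabilityTheory Real Matrix Filter
open scoped NNReal ENNReal

lemma pdf_mul (v₁ v₂ : ℝ≥0) (h₁ : v₁ ≠ 0) (h₂ : v₂ ≠ 0) (z x : ℝ) :
    gaussianPDFReal 0 v₁ x * gaussianPDFReal 0 v₂ (z - x)
      = gaussianPDFReal 0 (v₁ + v₂) z
        * gaussianPDFReal (z * v₁ / (v₁ + v₂)) (v₁ * v₂ / (v₁ + v₂)) x := by
  have ha : (0:ℝ) < v₁ := lt_of_le_of_ne v₁.coe_nonneg (by exact_mod_cast (Ne.symm h₁))
  have hb : (0:ℝ) < v₂ := lt_of_le_of_ne v₂.coe_nonneg (by exact_mod_cast (Ne.symm h₂))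
  have hab : (0:ℝ) < (v₁:ℝ) + v₂ := by linarith
  simp only [gaussianPDFReal, NNReal.coe_add, NNReal.coe_div, NNReal.coe_mul, sub_zero]
  rw [mul_mul_mul_comm]
  rw [mul_mul_mul_comm ((√(2 * π * ((v₁:ℝ) + v₂)))⁻¹)]
  congr 1
  · rw [← mul_inv, ← mul_inv, ← Real.sqrt_mul (by positivity), ← Real.sqrt_mul (by positivity)]
    congr 1
    field_simp
  · rw [← Real.exp_add, ← Real.exp_add]
    congr 1
    field_simp
    ring

lemma gaussian_conv (v₁ v₂ : ℝ≥0) :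
    Measure.map (fun p : ℝ × ℝ => p.1 + p.2)
      ((gaussianReal 0 v₁).prod (gaussianReal 0 v₂)) = gaussianReal 0 (v₁ + v₂) := by
  by_cases h₁ : v₁ = 0
  · subst h₁
    rw [gaussianReal_zero_var, Measure.dirac_prod, Measure.map_map (by fun_prop) (by fun_prop)]
    simp only [Function.comp_def, zero_add]
    simp [Measure.map_id']
  by_cases h₂ : v₂ = 0
  · subst h₂
    rw [gaussianReal_zero_var, Measure.prod_dirac, Measure.map_map (by fun_prop) (by fun_prop)]
    simp only [Function.comp_def, add_zero]
    simp [Measure.map_id']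
  have hab : v₁ + v₂ ≠ 0 := by positivity
  have hv₃ : v₁ * v₂ / (v₁ + v₂) ≠ 0 := by positivity
  ext s hs
  rw [Measure.map_apply (by fun_prop) hs, gaussianReal_apply _ hab,
    Measure.prod_apply (hs.preimage (by fun_prop))]
  have step1 : ∀ x : ℝ, gaussianReal 0 v₂ (Prod.mk x ⁻¹' ((fun p : ℝ × ℝ => p.1 + p.2) ⁻¹' s))
      = ∫⁻ z, s.indicator (fun _ => (1:ℝ≥0∞)) z * ENNReal.ofReal (gaussianPDFReal 0 v₂ (z - x)) := by
    intro x
    have hpre : MeasurableSet {y : ℝ | x + y ∈ s} := (hs.preimage (by fun_prop))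
    rw [show (Prod.mk x ⁻¹' ((fun p : ℝ × ℝ => p.1 + p.2) ⁻¹' s)) = {y : ℝ | x + y ∈ s} from rfl]
    rw [gaussianReal_apply _ h₂, ← lintegral_indicator hpre]
    rw [← lintegral_add_left_eq_self
      (fun z => s.indicator (fun _ => (1:ℝ≥0∞)) z * ENNReal.ofReal (gaussianPDFReal 0 v₂ (z - x))) x]
    congr 1
    ext y
    simp only [add_sub_cancel_left, Set.indicator_apply, Set.mem_setOf_eq, gaussianPDF_def]
    by_cases hy : x + y ∈ s <;> simp [hy]
  simp_rw [step1]
  rw [gaussianReal_of_var_ne_zero _ h₁,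
    lintegral_withDensity_eq_lintegral_mul _ (measurable_gaussianPDF _ _)
      (by
        apply Measurable.lintegral_prod_right (f := fun x z =>
          s.indicator (fun _ => (1:ℝ≥0∞)) z * ENNReal.ofReal (gaussianPDFReal 0 v₂ (z - x)))
        exact ((measurable_const.indicator hs).comp measurable_snd).mul
          ((measurable_gaussianPDFReal 0 v₂).comp (measurable_snd.sub measurable_fst)).ennreal_ofReal)]
  simp only [Pi.mul_apply, gaussianPDF_def]
  calc ∫⁻ x, ENNReal.ofReal (gaussianPDFReal 0 v₁ x) *
        ∫⁻ z, s.indicator (fun _ => (1:ℝ≥0∞)) z * ENNReal.ofReal (gaussianPDFReal 0 v₂ (z - x))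
      = ∫⁻ x, ∫⁻ z, s.indicator (fun _ => (1:ℝ≥0∞)) z *
          (ENNReal.ofReal (gaussianPDFReal 0 v₁ x) * ENNReal.ofReal (gaussianPDFReal 0 v₂ (z - x))) := by
        congr 1; ext x
        rw [← lintegral_const_mul' (ENNReal.ofReal (gaussianPDFReal 0 v₁ x)) _ ENNReal.ofReal_ne_top]
        congr 1; ext z; ring
    _ = ∫⁻ z, ∫⁻ x, s.indicator (fun _ => (1:ℝ≥0∞)) z *
          (ENNReal.ofReal (gaussianPDFReal 0 v₁ x) * ENNReal.ofReal (gaussianPDFReal 0 v₂ (z - x))) := by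
        rw [lintegral_lintegral_swap]
        apply Measurable.aemeasurable
        exact ((measurable_const.indicator hs).comp measurable_snd).mul
          (((measurable_gaussianPDFReal 0 v₁).comp measurable_fst).ennreal_ofReal.mul
            ((measurable_gaussianPDFReal 0 v₂).comp (measurable_snd.sub measurable_fst)).ennreal_ofReal)
    _ = ∫⁻ z, s.indicator (fun _ => (1:ℝ≥0∞)) z * ENNReal.ofReal (gaussianPDFReal 0 (v₁ + v₂) z) := by
        congr 1; ext z
        rw [lintegral_const_mul' _ _ (by by_cases hz : z ∈ s <;> simp [hz])]
        congr 1
        calc ∫⁻ x, ENNReal.ofReal (gaussianPDFReal 0 v₁ x) * ENNReal.ofReal (gaussianPDFReal 0 v₂ (z - x))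
            = ∫⁻ x, ENNReal.ofReal (gaussianPDFReal 0 (v₁ + v₂) z) *
                ENNReal.ofReal (gaussianPDFReal (z * v₁ / (v₁ + v₂)) (v₁ * v₂ / (v₁ + v₂)) x) := by
              congr 1; ext x
              rw [← ENNReal.ofReal_mul (gaussianPDFReal_nonneg _ _ _),
                ← ENNReal.ofReal_mul (gaussianPDFReal_nonneg _ _ _), pdf_mul _ _ h₁ h₂]
          _ = ENNReal.ofReal (gaussianPDFReal 0 (v₁ + v₂) z) := by
              rw [lintegral_const_mul' _ _ ENNReal.ofReal_ne_top,
                lintegral_gaussianPDFReal_eq_one _ hv₃, mul_one]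
    _ = ∫⁻ z in s, ENNReal.ofReal (gaussianPDFReal 0 (v₁ + v₂) z) := by
        rw [← lintegral_indicator hs]
        congr 1; ext z
        by_cases hz : z ∈ s <;> simp [hz]

lemma lintegral_pi_prod : ∀ (d : ℕ) (f : Fin d → ℝ → ℝ≥0∞), (∀ i, Measurable (f i)) →
    ∫⁻ x : Fin d → ℝ, ∏ i, f i (x i) ∂(Measure.pi fun _ => (volume : Measure ℝ))
      = ∏ i, ∫⁻ t, f i t := by
  intro d
  induction d with
  | zero =>
      intro f hf
      simp [lintegral_const]
  | succ n ih =>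
      intro f hf
      have mp := (measurePreserving_piFinSuccAbove (fun _ : Fin (n+1) => (volume : Measure ℝ)) 0).symm
      rw [← mp.lintegral_comp (by
        exact Finset.measurable_prod _ (fun i _ => (hf i).comp (measurable_pi_apply i)))]
      have heq : ∀ p : ℝ × (Fin n → ℝ),
          (∏ i, f i (((MeasurableEquiv.piFinSuccAbove (fun _ => ℝ) 0).symm p) i))
          = f 0 p.1 * ∏ j, f j.succ (p.2 j) := by
        intro p
        simp [Fin.prod_univ_succ, MeasurableEquiv.piFinSuccAbove, Fin.zero_succAbove]
      simp_rw [heq]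
      rw [lintegral_prod_mul (f := f 0) (g := fun z : Fin n → ℝ => ∏ j, f j.succ (z j))
        (hf 0).aemeasurable
        (Finset.measurable_prod _ (fun j _ => (hf j.succ).comp (measurable_pi_apply j))).aemeasurable]
      rw [ih (fun j => f j.succ) (fun j => hf j.succ), Fin.prod_univ_succ]


lemma mvGaussianPdf_std_eq {d : ℕ} (x : Fin d → ℝ) :
    mvGaussianPdf 0 1 x = ∏ i, gaussianPDFReal 0 1 (x i) := by
  have h2π : (0:ℝ) ≤ 2 * π := by positivity
  simp only [mvGaussianPdf, Matrix.det_one, inv_one, Matrix.one_mulVec, sub_zero,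
    Real.one_rpow, mul_one, gaussianPDFReal, NNReal.coe_one]
  rw [Finset.prod_mul_distrib, Finset.prod_const, ← Real.exp_sum, Finset.card_univ,
    Fintype.card_fin]
  congr 1
  · rw [Real.sqrt_eq_rpow, ← Real.rpow_neg h2π, ← Real.rpow_natCast ((2*π) ^ (-(1/2):ℝ)) d,
      ← Real.rpow_mul h2π]
    norm_num
    ring_nf
  · rw [Real.exp_eq_exp]
    simp only [dotProduct, mul_one, sub_zero]
    rw [← Finset.sum_div, ← Finset.sum_neg_distrib]
    congr 1
    exact Finset.sum_congr rfl fun i _ => by ring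

lemma mvGaussian_std_eq_pi (d : ℕ) :
    mvGaussian (0 : Fin d → ℝ) (1 : Matrix (Fin d) (Fin d) ℝ)
      = Measure.pi fun _ => gaussianReal 0 1 := by
  refine (Measure.pi_eq fun s hs => ?_).symm
  rw [mvGaussian, withDensity_apply _ (MeasurableSet.univ_pi hs),
    ← lintegral_indicator (MeasurableSet.univ_pi hs)]
  have hpt : ∀ x : Fin d → ℝ,
      (Set.pi Set.univ s).indicator (fun x => ENNReal.ofReal (mvGaussianPdf 0 1 x)) x
        = ∏ i, (s i).indicator (gaussianPDF 0 1) (x i) := by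
    intro x
    by_cases hx : x ∈ Set.pi Set.univ s
    · rw [Set.indicator_of_mem hx, mvGaussianPdf_std_eq,
        ENNReal.ofReal_prod_of_nonneg (fun i _ => gaussianPDFReal_nonneg _ _ _)]
      refine Finset.prod_congr rfl fun i _ => ?_
      rw [Set.indicator_of_mem (hx i (Set.mem_univ i)), gaussianPDF_def]
    · rw [Set.indicator_of_notMem hx]
      rw [Set.mem_univ_pi] at hx
      push_neg at hx
      obtain ⟨i, hi⟩ := hx
      exact (Finset.prod_eq_zero (Finset.mem_univ i) (Set.indicator_of_notMem hi _)).symm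
  simp_rw [hpt]
  rw [show (volume : Measure (Fin d → ℝ)) = Measure.pi fun _ => volume from volume_pi]
  rw [lintegral_pi_prod d (fun i t => (s i).indicator (gaussianPDF 0 1) t) (fun i => ((measurable_gaussianPDF 0 1).indicator (hs i) : Measurable fun t => (s i).indicator (gaussianPDF 0 1) t))]
  refine Finset.prod_congr rfl fun i _ => ?_
  rw [lintegral_indicator (hs i), gaussianReal_apply _ one_ne_zero]

lemma map_sum_gaussian : ∀ (n : ℕ) (b : Fin n → ℝ),
    Measure.map (fun e : Fin n → ℝ => ∑ i, b i * e i) (Measure.pi fun _ => gaussianReal 0 1)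
      = gaussianReal 0 (∑ i, (b i)^2).toNNReal := by
  intro n
  induction n with
  | zero =>
      intro b
      simp only [Finset.univ_eq_empty, Finset.sum_empty, Real.toNNReal_zero,
        gaussianReal_zero_var]
      rw [Measure.map_const]
      simp
  | succ n ih =>
      intro b
      have hsum : Measurable fun z : Fin n → ℝ => ∑ j, b j.succ * z j :=
        Finset.measurable_sum _ fun j _ => (measurable_pi_apply j).const_mul _
      have mp := measurePreserving_piFinSuccAbove (fun _ : Fin (n+1) => gaussianReal 0 1) 0
      have hcomp : (fun e : Fin (n+1) → ℝ => ∑ i, b i * e i)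
          = (fun p : ℝ × (Fin n → ℝ) => b 0 * p.1 + ∑ j, b j.succ * p.2 j)
            ∘ (MeasurableEquiv.piFinSuccAbove (fun _ => ℝ) 0) := by
        ext e
        simp [Fin.sum_univ_succ, MeasurableEquiv.piFinSuccAbove, Fin.zero_succAbove, Fin.tail]
      rw [hcomp, ← Measure.map_map
        (g := fun p : ℝ × (Fin n → ℝ) => b 0 * p.1 + ∑ j, b j.succ * p.2 j)
        (f := ⇑(MeasurableEquiv.piFinSuccAbove (fun _ => ℝ) 0))
        ((measurable_fst.const_mul _).add (hsum.comp measurable_snd))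
        (MeasurableEquiv.piFinSuccAbove _ 0).measurable, mp.map_eq]
      have hK : (fun p : ℝ × (Fin n → ℝ) => b 0 * p.1 + ∑ j, b j.succ * p.2 j)
          = (fun q : ℝ × ℝ => q.1 + q.2)
            ∘ (Prod.map (fun x => b 0 * x) (fun z : Fin n → ℝ => ∑ j, b j.succ * z j)) := rfl
      rw [hK, ← Measure.map_map
        (g := fun q : ℝ × ℝ => q.1 + q.2)
        (f := Prod.map (fun x => b 0 * x) (fun z : Fin n → ℝ => ∑ j, b j.succ * z j))
        (measurable_fst.add measurable_snd)
        ((measurable_const_mul _).prodMap hsum),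
        ← Measure.map_prod_map _ _ (measurable_const_mul _) hsum]
      rw [show (fun x : ℝ => b 0 * x) = (b 0 * ·) from rfl, gaussianReal_map_const_mul (b 0),
        ih (fun j => b j.succ), mul_zero, gaussian_conv]
      congr 1
      rw [← NNReal.coe_inj]
      push_cast
      rw [Real.coe_toNNReal _ (by positivity), Real.coe_toNNReal _ (by positivity),
        Fin.sum_univ_succ]
      ring

lemma gauss_map_neg : Measure.map (fun x : ℝ => -x) (gaussianReal 0 1) = gaussianReal 0 1 := by
  have h : (fun x : ℝ => -x) = ((-1 : ℝ) * ·) := by ext x; ring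
  rw [h, gaussianReal_map_const_mul]
  norm_num

lemma gauss_atom (μ : ℝ) {v : ℝ≥0} (hv : v ≠ 0) (a : ℝ) : gaussianReal μ v {a} = 0 :=
  gaussianReal_absolutelyContinuous μ hv (Real.volume_singleton)

lemma gauss_Ici_eq_Iic (t : ℝ) :
    gaussianReal 0 1 (Set.Ici t) = gaussianReal 0 1 (Set.Iic (-t)) := by
  conv_lhs => rw [← gauss_map_neg]
  rw [Measure.map_apply measurable_neg measurableSet_Ici]
  congr 1
  ext x
  simp [le_neg]

lemma stdNormalCDF_zero : stdNormalCDF 0 = 1/2 := by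
  have h := measure_union_add_inter (μ := gaussianReal 0 1) (Set.Iic 0) measurableSet_Ici (t := Set.Ici 0)
  rw [Set.Iic_union_Ici, Set.Iic_inter_Ici, Set.Icc_self, measure_univ,
    gauss_atom 0 one_ne_zero 0, gauss_Ici_eq_Iic, neg_zero] at h
  have hne : gaussianReal 0 1 (Set.Iic 0) ≠ ⊤ := measure_ne_top _ _
  rw [stdNormalCDF]
  have := congrArg ENNReal.toReal h
  rw [ENNReal.toReal_add hne hne] at this
  norm_num at this
  linarith

lemma pdf_shift (v : ℝ≥0) (hv : v ≠ 0) (x : ℝ) :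
    gaussianPDFReal 0 v x * rexp (x - v/2) = gaussianPDFReal v v x := by
  have hvR : (0:ℝ) < v := lt_of_le_of_ne v.coe_nonneg (by exact_mod_cast (Ne.symm hv))
  simp only [gaussianPDFReal, sub_zero]
  rw [mul_assoc, ← Real.exp_add]
  congr 2
  field_simp
  ring

lemma oneD (v : ℝ≥0) :
    ∫ x, min 1 (rexp (x - v/2)) ∂(gaussianReal 0 v)
      = 2 * stdNormalCDF (-Real.sqrt v / 2) := by
  by_cases hv : v = 0
  · subst hv
    rw [gaussianReal_zero_var, integral_dirac]
    norm_num [stdNormalCDF_zero]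
  have hvR : (0:ℝ) < v := lt_of_le_of_ne v.coe_nonneg (by exact_mod_cast (Ne.symm hv))
  have hsv : (0:ℝ) < Real.sqrt v := Real.sqrt_pos.mpr hvR
  have hmeas : Measurable fun x : ℝ => min 1 (rexp (x - (v:ℝ)/2)) :=
    measurable_const.min ((measurable_id.sub_const _).exp)
  have hInt : Integrable (fun x : ℝ => min 1 (rexp (x - (v:ℝ)/2))) (gaussianReal 0 v) := by
    refine Integrable.mono' (integrable_const 1) hmeas.aestronglyMeasurable (ae_of_all _ fun x => ?_)
    rw [Real.norm_eq_abs, abs_of_nonneg (le_min zero_le_one (Real.exp_nonneg _))]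
    exact min_le_left _ _
  rw [← integral_add_compl (measurableSet_Ici (a := (v:ℝ)/2)) hInt, Set.compl_Ici]
  have h1 : ∫ x in Set.Ici ((v:ℝ)/2), min 1 (rexp (x - (v:ℝ)/2)) ∂(gaussianReal 0 v)
      = (gaussianReal 0 v (Set.Ici ((v:ℝ)/2))).toReal := by
    rw [setIntegral_congr_fun measurableSet_Ici (g := fun _ => (1:ℝ))
      (fun x hx => min_eq_left (Real.one_le_exp (by simpa using hx)))]
    rw [setIntegral_const, smul_eq_mul, mul_one]
    rfl
  have h2 : ∫ x in Set.Iio ((v:ℝ)/2), min 1 (rexp (x - (v:ℝ)/2)) ∂(gaussianReal 0 v)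
      = (gaussianReal 0 v (Set.Iio (-((v:ℝ)/2)))).toReal := by
    rw [setIntegral_congr_fun measurableSet_Iio (g := fun x => rexp (x - (v:ℝ)/2))
      (fun x hx => min_eq_right (le_of_lt (Real.exp_lt_one_iff.mpr (by simpa [sub_neg] using hx))))]
    -- express as lintegral with density
    rw [integral_eq_lintegral_of_nonneg_ae (ae_of_all _ fun x => Real.exp_nonneg _)
      ((measurable_id'.sub_const _).exp.aestronglyMeasurable)]
    rw [gaussianReal_of_var_ne_zero _ hv, restrict_withDensity measurableSet_Iio,
      lintegral_withDensity_eq_lintegral_mul _ (measurable_gaussianPDF _ _)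
        (measurable_id'.sub_const _).exp.ennreal_ofReal]
    have hpt : ∀ x : ℝ, (gaussianPDF 0 v * fun x => ENNReal.ofReal (rexp (x - (v:ℝ)/2))) x
        = ENNReal.ofReal (gaussianPDFReal v v x) := by
      intro x
      simp only [Pi.mul_apply, gaussianPDF_def]
      rw [← ENNReal.ofReal_mul (gaussianPDFReal_nonneg _ _ _), pdf_shift v hv]
    simp_rw [hpt]
    have : ∫⁻ x in Set.Iio ((v:ℝ)/2), ENNReal.ofReal (gaussianPDFReal v v x)
        = gaussianReal v v (Set.Iio ((v:ℝ)/2)) := by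
      rw [gaussianReal_apply _ hv]; rfl
    rw [this]
    have hmap : gaussianReal (v:ℝ) v = Measure.map (· + (v:ℝ)) (gaussianReal 0 v) := by
      rw [gaussianReal_map_add_const, zero_add]
    have hset : (· + (v:ℝ)) ⁻¹' (Set.Iio ((v:ℝ)/2)) = Set.Iio (-((v:ℝ)/2)) := by
      ext x
      simp only [Set.mem_preimage, Set.mem_Iio]
      constructor <;> intro h <;> linarith
    rw [hmap, Measure.map_apply (measurable_add_const _) measurableSet_Iio, hset,
      gaussianReal_of_var_ne_zero _ hv]
  rw [h1, h2]
  -- now relate to standard normal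
  have hmapv : gaussianReal 0 v = Measure.map ((Real.sqrt v) * ·) (gaussianReal 0 1) := by
    rw [gaussianReal_map_const_mul, mul_zero]
    congr 1
    rw [← NNReal.coe_inj]
    push_cast
    rw [Real.sq_sqrt v.coe_nonneg, mul_one]
  have hIci : gaussianReal 0 v (Set.Ici ((v:ℝ)/2))
      = gaussianReal 0 1 (Set.Iic (-(Real.sqrt v)/2)) := by
    rw [hmapv, Measure.map_apply (measurable_const_mul _) measurableSet_Ici]
    have : ((Real.sqrt v) * ·) ⁻¹' (Set.Ici ((v:ℝ)/2)) = Set.Ici (Real.sqrt v / 2) := by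
      ext x
      simp only [Set.mem_preimage, Set.mem_Ici]
      constructor <;> intro h <;> nlinarith [Real.mul_self_sqrt v.coe_nonneg]
    rw [this, gauss_Ici_eq_Iic, neg_div]
  have hIio : gaussianReal 0 v (Set.Iio (-((v:ℝ)/2)))
      = gaussianReal 0 1 (Set.Iic (-(Real.sqrt v)/2)) := by
    rw [hmapv, Measure.map_apply (measurable_const_mul _) measurableSet_Iio]
    have : ((Real.sqrt v) * ·) ⁻¹' (Set.Iio (-((v:ℝ)/2))) = Set.Iio (-(Real.sqrt v)/2) := by
      ext x
      simp only [Set.mem_preimage, Set.mem_Iio]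
      constructor <;> intro h <;> nlinarith [Real.mul_self_sqrt v.coe_nonneg]
    rw [this]
    exact measure_congr (Iio_ae_eq_Iic' (gauss_atom 0 one_ne_zero _))
  rw [hIci, hIio, stdNormalCDF]
  ring

lemma inner_eq (n : ℕ) (b : Fin n → ℝ) :
    ∫ e, min 1 (rexp (∑ i, b i * e i - (∑ i, (b i)^2)/2))
        ∂(Measure.pi fun _ : Fin n => gaussianReal 0 1)
      = 2 * stdNormalCDF (-Real.sqrt (∑ i, (b i)^2) / 2) := by
  have hL : Measurable fun e : Fin n → ℝ => ∑ i, b i * e i :=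
    Finset.measurable_sum _ fun i _ => (measurable_pi_apply i).const_mul _
  have hs : (0:ℝ) ≤ ∑ i, (b i)^2 := by positivity
  have hvco : (((∑ i, (b i)^2).toNNReal : ℝ≥0) : ℝ) = ∑ i, (b i)^2 := Real.coe_toNNReal _ hs
  have hasm : AEStronglyMeasurable
      (fun x : ℝ => min 1 (rexp (x - (((∑ i, (b i)^2).toNNReal : ℝ≥0) : ℝ)/2)))
      (Measure.map (fun e : Fin n → ℝ => ∑ i, b i * e i)
        (Measure.pi fun _ => gaussianReal 0 1)) :=
    (measurable_const.min ((measurable_id'.sub_const _).exp)).aestronglyMeasurable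
  calc ∫ e, min 1 (rexp (∑ i, b i * e i - (∑ i, (b i)^2)/2))
        ∂(Measure.pi fun _ : Fin n => gaussianReal 0 1)
      = ∫ y, min 1 (rexp (y - (((∑ i, (b i)^2).toNNReal : ℝ≥0) : ℝ)/2))
          ∂(Measure.map (fun e : Fin n → ℝ => ∑ i, b i * e i)
            (Measure.pi fun _ => gaussianReal 0 1)) := by
        rw [integral_map hL.aemeasurable hasm]
        simp only [hvco]
    _ = ∫ y, min 1 (rexp (y - (((∑ i, (b i)^2).toNNReal : ℝ≥0) : ℝ)/2))
          ∂(gaussianReal 0 ((∑ i, (b i)^2).toNNReal)) := by rw [map_sum_gaussian]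
    _ = 2 * stdNormalCDF (-Real.sqrt (((∑ i, (b i)^2).toNNReal : ℝ≥0) : ℝ) / 2) := oneD _
    _ = 2 * stdNormalCDF (-Real.sqrt (∑ i, (b i)^2) / 2) := by rw [hvco]

/-- Closed form for the expected acceptance probability in the Roberts–Gelman–Gilks
framework: for a random vector `θ`, an independent `ε ∼ N(0, I_d)` and measurable `ψ`,
`E[min{1, exp((ℓ/√d)∑ᵢψ(θᵢ)εᵢ − (ℓ²/(2d))∑ᵢψ(θᵢ)²)}] = 2 E[Φ(−(ℓ/2)√((1/d)∑ᵢψ(θᵢ)²))]`. -/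
theorem acceptance_rgg_closed_form {d : ℕ} (hd : 1 ≤ d) (l : ℝ) (hl : 0 < l)
    {Ω : Type*} [MeasureSpace Ω] [IsProbabilityMeasure (ℙ : Measure Ω)]
    (θ ε : Ω → (Fin d → ℝ)) (hθm : Measurable θ) (hεm : Measurable ε)
    (hε : Measure.map ε ℙ = mvGaussian 0 1)
    (hindep : IndepFun θ ε ℙ)
    (ψ : ℝ → ℝ) (hψ : Measurable ψ) :
    ∫ ω, min 1 (Real.exp ((l / Real.sqrt (d : ℝ)) * ∑ i, ψ (θ ω i) * ε ω i
        - (l ^ 2 / (2 * (d : ℝ))) * ∑ i, ψ (θ ω i) ^ 2)) ∂ℙ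
      = 2 * ∫ ω, stdNormalCDF (-(l / 2) *
          Real.sqrt ((1 / (d : ℝ)) * ∑ i, ψ (θ ω i) ^ 2)) ∂ℙ := by
  have hd0 : (0:ℝ) < d := by exact_mod_cast Nat.lt_of_lt_of_le Nat.zero_lt_one hd
  have hsd : (0:ℝ) < Real.sqrt d := Real.sqrt_pos.mpr hd0
  have hcpos : 0 < l / Real.sqrt d := div_pos hl hsd
  have hcsq : (l / Real.sqrt d)^2 = l^2 / d := by
    rw [div_pow, Real.sq_sqrt hd0.le]
  set c : ℝ := l / Real.sqrt d with hc
  have hjoint : Measure.map (fun ω => (θ ω, ε ω)) ℙ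
      = (Measure.map θ ℙ).prod (Measure.map ε ℙ) :=
    (indepFun_iff_map_prod_eq_prod_map_map hθm.aemeasurable hεm.aemeasurable).mp hindep
  haveI hprobθ : IsProbabilityMeasure (Measure.map θ ℙ) :=
    Measure.isProbabilityMeasure_map hθm.aemeasurable
  haveI hprobε : IsProbabilityMeasure (Measure.map ε ℙ) :=
    Measure.isProbabilityMeasure_map hεm.aemeasurable
  have hψe : ∀ i : Fin d, Measurable fun p : (Fin d → ℝ) × (Fin d → ℝ) => ψ (p.1 i) :=
    fun i => hψ.comp ((measurable_pi_apply i).comp measurable_fst)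
  have hFmeas : Measurable (fun p : (Fin d → ℝ) × (Fin d → ℝ) =>
      min 1 (rexp (∑ i, (c * ψ (p.1 i)) * p.2 i - (∑ i, (c * ψ (p.1 i))^2)/2))) := by
    refine measurable_const.min (Real.measurable_exp.comp (Measurable.sub ?_ (Measurable.div_const ?_ 2)))
    · exact Finset.measurable_sum _ fun i _ =>
        ((hψe i).const_mul c).mul ((measurable_pi_apply i).comp measurable_snd)
    · exact Finset.measurable_sum _ fun i _ => ((hψe i).const_mul c).pow_const 2
  have hFint : Integrable (fun p : (Fin d → ℝ) × (Fin d → ℝ) =>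
      min 1 (rexp (∑ i, (c * ψ (p.1 i)) * p.2 i - (∑ i, (c * ψ (p.1 i))^2)/2)))
      ((Measure.map θ ℙ).prod (Measure.map ε ℙ)) := by
    refine Integrable.mono' (integrable_const 1) hFmeas.aestronglyMeasurable
      (ae_of_all _ fun p => ?_)
    rw [Real.norm_eq_abs, abs_of_nonneg (le_min zero_le_one (Real.exp_nonneg _))]
    exact min_le_left _ _
  have hint_eq : ∀ ω, min 1 (rexp (c * ∑ i, ψ (θ ω i) * ε ω i
        - (l^2/(2*(d:ℝ))) * ∑ i, ψ (θ ω i)^2))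
      = min 1 (rexp (∑ i, (c * ψ (θ ω i)) * ε ω i - (∑ i, (c * ψ (θ ω i))^2)/2)) := by
    intro ω
    have e1 : ∑ i, (c * ψ (θ ω i)) * ε ω i = c * ∑ i, ψ (θ ω i) * ε ω i := by
      rw [Finset.mul_sum]; exact Finset.sum_congr rfl fun i _ => by ring
    have e2 : ∑ i, (c * ψ (θ ω i))^2 = c^2 * ∑ i, ψ (θ ω i)^2 := by
      rw [Finset.mul_sum]; exact Finset.sum_congr rfl fun i _ => by ring
    rw [e1, e2, hcsq]
    congr 2
    field_simp
  have hmap1 : ∫ p, min 1 (rexp (∑ i, (c * ψ (p.1 i)) * p.2 i - (∑ i, (c * ψ (p.1 i))^2)/2))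
        ∂((Measure.map θ ℙ).prod (Measure.map ε ℙ))
      = ∫ ω, min 1 (rexp (∑ i, (c * ψ (θ ω i)) * ε ω i - (∑ i, (c * ψ (θ ω i))^2)/2)) ∂ℙ := by
    rw [← hjoint]
    exact integral_map (hθm.prodMk hεm).aemeasurable hFmeas.aestronglyMeasurable
  simp_rw [hint_eq]
  rw [← hmap1, integral_prod _ hFint]
  have hinner : ∀ a : Fin d → ℝ,
      ∫ e, min 1 (rexp (∑ i, (c * ψ (a i)) * e i - (∑ i, (c * ψ (a i))^2)/2))
          ∂(Measure.map ε ℙ)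
      = 2 * stdNormalCDF (-(l / 2) * Real.sqrt ((1 / (d:ℝ)) * ∑ i, ψ (a i)^2)) := by
    intro a
    rw [hε, mvGaussian_std_eq_pi, inner_eq d (fun i => c * ψ (a i))]
    congr 1
    rw [show ∑ i, (c * ψ (a i))^2 = c^2 * ∑ i, ψ (a i)^2 by
      rw [Finset.mul_sum]; exact Finset.sum_congr rfl fun i _ => by ring, hcsq]
    rw [show l^2/(d:ℝ) * ∑ i, ψ (a i)^2 = l^2 * ((1/(d:ℝ)) * ∑ i, ψ (a i)^2) by ring,
      Real.sqrt_mul (sq_nonneg l), Real.sqrt_sq hl.le]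
    ring
  simp_rw [hinner]
  rw [integral_const_mul]
  congr 1
  have hg : Measurable fun a : Fin d → ℝ =>
      stdNormalCDF (-(l / 2) * Real.sqrt ((1 / (d:ℝ)) * ∑ i, ψ (a i)^2)) := by
    have hcdf : Measurable stdNormalCDF := by
      refine Monotone.measurable fun x y hxy => ?_
      exact ENNReal.toReal_mono (measure_ne_top _ _)
        (measure_mono (Set.Iic_subset_Iic.mpr hxy))
    exact hcdf.comp ((Real.continuous_sqrt.measurable.comp
      ((Finset.measurable_sum _ fun i _ =>
        (hψ.comp (measurable_pi_apply i)).pow_const 2).const_mul _)).const_mul _)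
  rw [integral_map hθm.aemeasurable hg.aestronglyMeasurable]
end

section
/- Let d ≥ 1, let p and q be probability density functions on ℝ^d, let C and F be d×d real positive definite matrices, and let W be a random vector with distribution N(0, C). Then ∫∫ ‖z' − z‖²_F · |min{p(z), p(z')} − min{q(z), q(z')}| · φ(z'; z, C) dz' dz ≤ 2 · E[‖W‖²_F] · ∫ |p(z) − q(z)| dz. (Stability of the expected squared jumping distance under perturbation of the target density in total variation.) -/
open MeasureTheory ProbabilityTheory Real Matrix Filter
open scoped ENNReal

section Helpers

lemma esjd_coercive {d : ℕ} (hd : 1 ≤ d) {M : Matrix (Fin d) (Fin d) ℝ} (hM : M.PosDef) :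
    ∃ m : ℝ, 0 < m ∧ ∀ x : Fin d → ℝ, m * (∑ i, x i ^ 2) ≤ x ⬝ᵥ (M *ᵥ x) := by
  haveI : Nonempty (Fin d) := ⟨⟨0, hd⟩⟩
  set E := EuclideanSpace ℝ (Fin d)
  have hcont : Continuous (fun v : E => (v : Fin d → ℝ) ⬝ᵥ (M *ᵥ (v : Fin d → ℝ))) := by
    have h : Continuous (fun v : Fin d → ℝ => v ⬝ᵥ (M *ᵥ v)) := by
      simp only [dotProduct, Matrix.mulVec]; fun_prop
    exact h.comp (EuclideanSpace.equiv (Fin d) ℝ).continuous_toFun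
  have hsph : IsCompact (Metric.sphere (0 : E) 1) := isCompact_sphere 0 1
  have hne : (Metric.sphere (0 : E) 1).Nonempty := NormedSpace.sphere_nonempty.2 zero_le_one
  obtain ⟨x₀, hx₀mem, hx₀min⟩ := hsph.exists_isMinOn hne hcont.continuousOn
  have hx₀norm : ‖x₀‖ = 1 := by simpa using hx₀mem
  have hx₀ne : (x₀ : Fin d → ℝ) ≠ 0 := by
    intro h
    have : x₀ = 0 := by ext i; exact congrFun h i
    rw [this] at hx₀norm; simp at hx₀norm
  set m := (x₀ : Fin d → ℝ) ⬝ᵥ (M *ᵥ (x₀ : Fin d → ℝ)) with hm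
  have hmpos : 0 < m := by simpa using hM.dotProduct_mulVec_pos hx₀ne
  refine ⟨m, hmpos, fun x => ?_⟩
  by_cases hx : x = 0
  · simp [hx]
  · set y : E := (EuclideanSpace.equiv (Fin d) ℝ).symm x
    have hyne : y ≠ 0 := by
      intro h; apply hx
      ext i
      exact congrFun (congrArg (fun v : E => (v : Fin d → ℝ)) h) i
    have hynorm : 0 < ‖y‖ := norm_pos_iff.2 hyne
    set u : E := ‖y‖⁻¹ • y
    have humem : u ∈ Metric.sphere (0 : E) 1 := by
      simp [u, norm_smul, abs_of_pos (inv_pos.2 hynorm), inv_mul_cancel₀ hynorm.ne']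
    have hmin := hx₀min humem
    have hquad : (u : Fin d → ℝ) ⬝ᵥ (M *ᵥ (u : Fin d → ℝ))
        = ‖y‖⁻¹ * ‖y‖⁻¹ * (x ⬝ᵥ (M *ᵥ x)) := by
      have hu : (u : Fin d → ℝ) = ‖y‖⁻¹ • x := rfl
      rw [hu, Matrix.mulVec_smul, smul_dotProduct, dotProduct_smul]
      simp [smul_eq_mul]; ring
    have hnormsq : ‖y‖ ^ 2 = ∑ i, x i ^ 2 := by
      rw [EuclideanSpace.norm_eq, Real.sq_sqrt (by positivity)]
      simp [y, Real.norm_eq_abs, sq_abs]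
    have h1 : m ≤ ‖y‖⁻¹ * ‖y‖⁻¹ * (x ⬝ᵥ (M *ᵥ x)) := hquad ▸ hmin
    have hinv : ‖y‖⁻¹ * ‖y‖ = 1 := inv_mul_cancel₀ hynorm.ne'
    have h2 := mul_le_mul_of_nonneg_right h1 (sq_nonneg ‖y‖)
    rw [← hnormsq]
    have h3 : ‖y‖⁻¹ * ‖y‖⁻¹ * (x ⬝ᵥ (M *ᵥ x)) * ‖y‖ ^ 2 = x ⬝ᵥ (M *ᵥ x) := by
      field_simp
    linarith [h2, h3]

lemma esjd_quad_upper {d : ℕ} (F : Matrix (Fin d) (Fin d) ℝ) :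
    ∃ b : ℝ, 0 ≤ b ∧ ∀ x : Fin d → ℝ, x ⬝ᵥ (F *ᵥ x) ≤ b * ∑ i, x i ^ 2 := by
  refine ⟨∑ i, ∑ j, |F i j|, by positivity, fun x => ?_⟩
  set s := ∑ i, x i ^ 2 with hs
  have hsq : ∀ k, x k ^ 2 ≤ s := fun k =>
    Finset.single_le_sum (f := fun k => x k ^ 2) (fun _ _ => sq_nonneg _) (Finset.mem_univ k)
  have key : ∀ i j, x i * (F i j * x j) ≤ |F i j| * s := by
    intro i j
    have h1 : x i * (F i j * x j) ≤ |F i j| * (|x i| * |x j|) := by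
      calc x i * (F i j * x j) ≤ |x i * (F i j * x j)| := le_abs_self _
        _ = |F i j| * (|x i| * |x j|) := by rw [abs_mul, abs_mul]; ring
    refine h1.trans (mul_le_mul_of_nonneg_left ?_ (abs_nonneg _))
    nlinarith [hsq i, hsq j, sq_nonneg (|x i| - |x j|), sq_abs (x i), sq_abs (x j),
      abs_nonneg (x i), abs_nonneg (x j)]
  calc x ⬝ᵥ (F *ᵥ x) = ∑ i, ∑ j, x i * (F i j * x j) := by
        simp [dotProduct, Matrix.mulVec, Finset.mul_sum]
    _ ≤ ∑ i, ∑ j, |F i j| * s :=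
        Finset.sum_le_sum fun i _ => Finset.sum_le_sum fun j _ => key i j
    _ = (∑ i, ∑ j, |F i j|) * s := by rw [Finset.sum_mul]; simp [Finset.sum_mul]

lemma quadForm_continuous {d : ℕ} (M : Matrix (Fin d) (Fin d) ℝ) :
    Continuous (quadForm M) := by
  unfold quadForm
  simp only [dotProduct, Matrix.mulVec]
  fun_prop

lemma quadForm_measurable {d : ℕ} (M : Matrix (Fin d) (Fin d) ℝ) :
    Measurable (quadForm M) := (quadForm_continuous M).measurable

lemma quadForm_nonneg_s16 {d : ℕ} {M : Matrix (Fin d) (Fin d) ℝ} (hM : M.PosDef)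
    (x : Fin d → ℝ) : 0 ≤ quadForm M x := by
  have := hM.posSemidef.dotProduct_mulVec_nonneg x
  simpa [quadForm] using this

lemma pdf_measurable {d : ℕ} (μ : Fin d → ℝ) (S : Matrix (Fin d) (Fin d) ℝ) :
    Measurable (mvGaussianPdf μ S) := by
  unfold mvGaussianPdf
  simp only [dotProduct, Matrix.mulVec]
  fun_prop

lemma pdf_nonneg {d : ℕ} {S : Matrix (Fin d) (Fin d) ℝ} (hS : S.PosDef) (μ x : Fin d → ℝ) :
    0 ≤ mvGaussianPdf μ S x := by
  unfold mvGaussianPdf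
  have h1 : (0:ℝ) < (2 * Real.pi) ^ (-(d : ℝ) / 2) :=
    Real.rpow_pos_of_pos (by positivity) _
  have h2 : (0:ℝ) < S.det ^ (-(1:ℝ) / 2) := Real.rpow_pos_of_pos hS.det_pos _
  positivity

lemma esjd_moment_integrable {d : ℕ} (hd : 1 ≤ d) (C F : Matrix (Fin d) (Fin d) ℝ)
    (hC : C.PosDef) (hF : F.PosDef) :
    Integrable (fun x : Fin d → ℝ => quadForm F x * mvGaussianPdf 0 C x) := by
  obtain ⟨m, hm, hml⟩ := esjd_coercive hd hC.inv
  obtain ⟨b, hb, hbu⟩ := esjd_quad_upper F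
  have hQ0 : ∀ x : Fin d → ℝ, 0 ≤ x ⬝ᵥ (F *ᵥ x) := fun x => quadForm_nonneg_s16 hF x
  have hbase : Integrable (fun x : Fin d → ℝ =>
      (x ⬝ᵥ (F *ᵥ x)) * Real.exp (-(x ⬝ᵥ (C⁻¹ *ᵥ x)) / 2)) := by
    have hmeas : Measurable (fun x : Fin d → ℝ =>
        (x ⬝ᵥ (F *ᵥ x)) * Real.exp (-(x ⬝ᵥ (C⁻¹ *ᵥ x)) / 2)) := by
      simp only [dotProduct, Matrix.mulVec]; fun_prop
    have hdom : Integrable (fun x : Fin d → ℝ =>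
        b * (4 / m) * ∏ i, Real.exp (-(m/4) * (x i) ^ 2)) := by
      apply Integrable.const_mul
      exact Integrable.fintype_prod fun _ => integrable_exp_neg_mul_sq (by positivity)
    refine hdom.mono' hmeas.aestronglyMeasurable (Filter.Eventually.of_forall fun x => ?_)
    set s := ∑ i, x i ^ 2 with hs
    have hs0 : 0 ≤ s := Finset.sum_nonneg fun _ _ => sq_nonneg _
    have hexp : Real.exp (-(x ⬝ᵥ (C⁻¹ *ᵥ x)) / 2) ≤ Real.exp (-(m * s) / 2) := by
      apply Real.exp_le_exp.2; nlinarith [hml x]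
    have step1 : (x ⬝ᵥ (F *ᵥ x)) * Real.exp (-(x ⬝ᵥ (C⁻¹ *ᵥ x)) / 2)
        ≤ (b * s) * Real.exp (-(m * s) / 2) :=
      mul_le_mul (hbu x) hexp (Real.exp_nonneg _) (by positivity)
    have step2 : s ≤ (4 / m) * Real.exp (m * s / 4) := by
      have h := Real.add_one_le_exp (m * s / 4)
      have h2 : m * s / 4 ≤ Real.exp (m * s / 4) := by linarith
      have h3 := mul_le_mul_of_nonneg_left h2 (le_of_lt (div_pos (by norm_num : (0:ℝ) < 4) hm))
      calc s = (4 / m) * (m * s / 4) := by field_simp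
        _ ≤ (4 / m) * Real.exp (m * s / 4) := h3
    have step3 : (b * s) * Real.exp (-(m * s) / 2)
        ≤ b * (4 / m) * Real.exp (-(m * s) / 4) := by
      have h1 : s * Real.exp (-(m * s) / 2) ≤ (4 / m) * Real.exp (-(m * s) / 4) := by
        calc s * Real.exp (-(m * s) / 2)
            ≤ ((4 / m) * Real.exp (m * s / 4)) * Real.exp (-(m * s) / 2) :=
              mul_le_mul_of_nonneg_right step2 (Real.exp_nonneg _)
          _ = (4 / m) * Real.exp (-(m * s) / 4) := by
              rw [mul_assoc, ← Real.exp_add]; ring_nf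
      calc (b * s) * Real.exp (-(m * s) / 2) = b * (s * Real.exp (-(m * s) / 2)) := by ring
        _ ≤ b * ((4 / m) * Real.exp (-(m * s) / 4)) := mul_le_mul_of_nonneg_left h1 hb
        _ = b * (4 / m) * Real.exp (-(m * s) / 4) := by ring
    have hprod : Real.exp (-(m * s) / 4) = ∏ i, Real.exp (-(m/4) * (x i) ^ 2) := by
      rw [← Real.exp_sum]
      congr 1
      rw [hs, Finset.mul_sum, neg_div, Finset.sum_div, ← neg_one_mul, Finset.mul_sum]
      apply Finset.sum_congr rfl
      intros; ring
    have hnorm : ‖(x ⬝ᵥ (F *ᵥ x)) * Real.exp (-(x ⬝ᵥ (C⁻¹ *ᵥ x)) / 2)‖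
        = (x ⬝ᵥ (F *ᵥ x)) * Real.exp (-(x ⬝ᵥ (C⁻¹ *ᵥ x)) / 2) := by
      rw [Real.norm_eq_abs, abs_of_nonneg (mul_nonneg (hQ0 x) (Real.exp_nonneg _))]
    rw [hnorm]
    refine step1.trans (step3.trans (le_of_eq ?_))
    rw [hprod]
  have heq : (fun x : Fin d → ℝ => quadForm F x * mvGaussianPdf 0 C x)
      = fun x => ((2 * Real.pi) ^ (-(d : ℝ) / 2) * C.det ^ (-(1:ℝ) / 2)) *
          ((x ⬝ᵥ (F *ᵥ x)) * Real.exp (-(x ⬝ᵥ (C⁻¹ *ᵥ x)) / 2)) := by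
    funext x
    simp only [quadForm, mvGaussianPdf, sub_zero]
    ring
  rw [heq]
  exact hbase.const_mul _


lemma esjd_main {d : ℕ} (p q Q g : (Fin d → ℝ) → ℝ)
    (hpm : Measurable p) (hqm : Measurable q) (hQm : Measurable Q) (hgm : Measurable g)
    (hQ0 : ∀ x, 0 ≤ Q x) (hg0 : ∀ x, 0 ≤ g x)
    (hp_int : Integrable p) (hq_int : Integrable q)
    (hQg_int : Integrable (fun x => Q x * g x)) :
    ∫ z : Fin d → ℝ, ∫ z' : Fin d → ℝ,
        Q (z' - z) * |min (p z) (p z') - min (q z) (q z')| * g (z' - z)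
      ≤ 2 * (∫ x, Q x * g x) * ∫ z, |p z - q z| := by
  have hpq_int : Integrable (fun z => |p z - q z|) := (hp_int.sub hq_int).abs
  have hQg_m : Measurable (fun x => Q x * g x) := hQm.mul hgm
  have hQg_0 : ∀ x, 0 ≤ Q x * g x := fun x => mul_nonneg (hQ0 x) (hg0 x)
  set K := ∫ x, Q x * g x with hK
  have hK0 : 0 ≤ K := integral_nonneg hQg_0
  set Tv := ∫ z, |p z - q z| with hTv
  have hTv0 : 0 ≤ Tv := integral_nonneg fun z => abs_nonneg _
  set I : ℝ≥0∞ := ∫⁻ x, ENNReal.ofReal (Q x * g x) with hIdef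
  have hIeq : I = ENNReal.ofReal K :=
    (ofReal_integral_eq_lintegral_ofReal hQg_int (Eventually.of_forall hQg_0)).symm
  have hI_ne : I ≠ ⊤ := by rw [hIeq]; exact ENNReal.ofReal_ne_top
  set T : ℝ≥0∞ := ∫⁻ z, ENNReal.ofReal |p z - q z| with hTdef
  have hTeq : T = ENNReal.ofReal Tv :=
    (ofReal_integral_eq_lintegral_ofReal hpq_int
      (Eventually.of_forall fun z => abs_nonneg _)).symm
  have hT_ne : T ≠ ⊤ := by rw [hTeq]; exact ENNReal.ofReal_ne_top
  -- measurability on the product space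
  have hsub : Measurable (fun zz : (Fin d → ℝ) × (Fin d → ℝ) => zz.2 - zz.1) :=
    measurable_snd.sub measurable_fst
  have hminm : Measurable (fun zz : (Fin d → ℝ) × (Fin d → ℝ) =>
      |min (p zz.1) (p zz.2) - min (q zz.1) (q zz.2)|) :=
    (((hpm.comp measurable_fst).min (hpm.comp measurable_snd)).sub
      ((hqm.comp measurable_fst).min (hqm.comp measurable_snd))).abs
  have hfm : Measurable (fun zz : (Fin d → ℝ) × (Fin d → ℝ) =>
      Q (zz.2 - zz.1) * |min (p zz.1) (p zz.2) - min (q zz.1) (q zz.2)| * g (zz.2 - zz.1)) :=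
    ((hQm.comp hsub).mul hminm).mul (hgm.comp hsub)
  have hΦm : Measurable (fun zz : (Fin d → ℝ) × (Fin d → ℝ) =>
      ENNReal.ofReal (Q (zz.2 - zz.1) * |min (p zz.1) (p zz.2) - min (q zz.1) (q zz.2)|
        * g (zz.2 - zz.1))) := hfm.ennreal_ofReal
  have hAm : Measurable (fun zz : (Fin d → ℝ) × (Fin d → ℝ) =>
      ENNReal.ofReal (Q (zz.2 - zz.1) * g (zz.2 - zz.1)) * ENNReal.ofReal |p zz.1 - q zz.1|) :=
    ((hQg_m.comp hsub).ennreal_ofReal).mul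
      (((hpm.sub hqm).abs.comp measurable_fst).ennreal_ofReal)
  have hBm : Measurable (fun zz : (Fin d → ℝ) × (Fin d → ℝ) =>
      ENNReal.ofReal (Q (zz.2 - zz.1) * g (zz.2 - zz.1)) * ENNReal.ofReal |p zz.2 - q zz.2|) :=
    ((hQg_m.comp hsub).ennreal_ofReal).mul
      (((hpm.sub hqm).abs.comp measurable_snd).ennreal_ofReal)
  -- pointwise bound
  have hpt : ∀ zz : (Fin d → ℝ) × (Fin d → ℝ),
      ENNReal.ofReal (Q (zz.2 - zz.1) * |min (p zz.1) (p zz.2) - min (q zz.1) (q zz.2)|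
        * g (zz.2 - zz.1))
      ≤ ENNReal.ofReal (Q (zz.2 - zz.1) * g (zz.2 - zz.1)) * ENNReal.ofReal |p zz.1 - q zz.1|
        + ENNReal.ofReal (Q (zz.2 - zz.1) * g (zz.2 - zz.1))
          * ENNReal.ofReal |p zz.2 - q zz.2| := by
    rintro ⟨z, z'⟩
    simp only
    have habs : |min (p z) (p z') - min (q z) (q z')| ≤ |p z - q z| + |p z' - q z'| := by
      refine (abs_min_sub_min_le_max _ _ _ _).trans ?_
      exact max_le (le_add_of_nonneg_right (abs_nonneg _)) (le_add_of_nonneg_left (abs_nonneg _))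
    have hreal : Q (z' - z) * |min (p z) (p z') - min (q z) (q z')| * g (z' - z)
        ≤ (Q (z' - z) * g (z' - z)) * |p z - q z| + (Q (z' - z) * g (z' - z)) * |p z' - q z'| := by
      have h0 : 0 ≤ Q (z' - z) * g (z' - z) := hQg_0 _
      calc Q (z' - z) * |min (p z) (p z') - min (q z) (q z')| * g (z' - z)
          = (Q (z' - z) * g (z' - z)) * |min (p z) (p z') - min (q z) (q z')| := by ring
        _ ≤ (Q (z' - z) * g (z' - z)) * (|p z - q z| + |p z' - q z'|) :=
            mul_le_mul_of_nonneg_left habs h0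
        _ = (Q (z' - z) * g (z' - z)) * |p z - q z|
            + (Q (z' - z) * g (z' - z)) * |p z' - q z'| := by ring
    calc ENNReal.ofReal (Q (z' - z) * |min (p z) (p z') - min (q z) (q z')| * g (z' - z))
        ≤ ENNReal.ofReal ((Q (z' - z) * g (z' - z)) * |p z - q z|
            + (Q (z' - z) * g (z' - z)) * |p z' - q z'|) := ENNReal.ofReal_le_ofReal hreal
      _ = ENNReal.ofReal ((Q (z' - z) * g (z' - z)) * |p z - q z|)
            + ENNReal.ofReal ((Q (z' - z) * g (z' - z)) * |p z' - q z'|) :=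
          ENNReal.ofReal_add (mul_nonneg (hQg_0 _) (abs_nonneg _))
            (mul_nonneg (hQg_0 _) (abs_nonneg _))
      _ = ENNReal.ofReal (Q (z' - z) * g (z' - z)) * ENNReal.ofReal |p z - q z|
            + ENNReal.ofReal (Q (z' - z) * g (z' - z)) * ENNReal.ofReal |p z' - q z'| := by
          rw [ENNReal.ofReal_mul (hQg_0 _), ENNReal.ofReal_mul (hQg_0 _)]
  -- term A over the product measure
  have hA : (∫⁻ zz : (Fin d → ℝ) × (Fin d → ℝ),
      ENNReal.ofReal (Q (zz.2 - zz.1) * g (zz.2 - zz.1)) * ENNReal.ofReal |p zz.1 - q zz.1|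
      ∂(volume.prod volume)) = I * T := by
    rw [lintegral_prod _ hAm.aemeasurable]
    have hinner : ∀ z : Fin d → ℝ, (∫⁻ z',
        ENNReal.ofReal (Q (z' - z) * g (z' - z)) * ENNReal.ofReal |p z - q z|) =
        I * ENNReal.ofReal |p z - q z| := by
      intro z
      have hm1 : Measurable fun z' : Fin d → ℝ => ENNReal.ofReal (Q (z' - z) * g (z' - z)) :=
        (hQg_m.comp (measurable_id.sub measurable_const)).ennreal_ofReal
      rw [lintegral_mul_const _ hm1]
      congr 1
      exact lintegral_sub_right_eq_self (fun x => ENNReal.ofReal (Q x * g x)) z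
    simp only [hinner]
    exact lintegral_const_mul _ ((hpm.sub hqm).abs.ennreal_ofReal)
  -- term B over the product measure
  have hB : (∫⁻ zz : (Fin d → ℝ) × (Fin d → ℝ),
      ENNReal.ofReal (Q (zz.2 - zz.1) * g (zz.2 - zz.1)) * ENNReal.ofReal |p zz.2 - q zz.2|
      ∂(volume.prod volume)) = I * T := by
    rw [lintegral_prod_symm _ hBm.aemeasurable]
    have hinner : ∀ z' : Fin d → ℝ, (∫⁻ z,
        ENNReal.ofReal (Q (z' - z) * g (z' - z)) * ENNReal.ofReal |p z' - q z'|) =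
        I * ENNReal.ofReal |p z' - q z'| := by
      intro z'
      have hm1 : Measurable fun z : Fin d → ℝ => ENNReal.ofReal (Q (z' - z) * g (z' - z)) :=
        (hQg_m.comp (measurable_const.sub measurable_id)).ennreal_ofReal
      rw [lintegral_mul_const _ hm1]
      congr 1
      exact (Measure.measurePreserving_sub_left volume z').lintegral_comp
        (hQg_m.ennreal_ofReal)
    simp only [hinner]
    exact lintegral_const_mul _ ((hpm.sub hqm).abs.ennreal_ofReal)
  -- the main lintegral bound
  set L : ℝ≥0∞ := ∫⁻ z, ∫⁻ z', ENNReal.ofReal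
    (Q (z' - z) * |min (p z) (p z') - min (q z) (q z')| * g (z' - z)) with hLdef
  have hLprod : L = ∫⁻ zz : (Fin d → ℝ) × (Fin d → ℝ),
      ENNReal.ofReal (Q (zz.2 - zz.1) * |min (p zz.1) (p zz.2) - min (q zz.1) (q zz.2)|
        * g (zz.2 - zz.1)) ∂(volume.prod volume) :=
    (lintegral_prod _ hΦm.aemeasurable).symm
  have hLle : L ≤ I * T + I * T := by
    rw [hLprod]
    refine le_trans (lintegral_mono hpt) ?_
    rw [lintegral_add_left hAm, hA, hB]
  have hL_ne : L ≠ ⊤ := by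
    refine ne_top_of_le_ne_top ?_ hLle
    exact ENNReal.add_ne_top.2 ⟨ENNReal.mul_ne_top hI_ne hT_ne, ENNReal.mul_ne_top hI_ne hT_ne⟩
  -- identify the real double integral with L.toReal
  have hG : ∀ z : Fin d → ℝ, (∫ z', Q (z' - z) * |min (p z) (p z') - min (q z) (q z')|
      * g (z' - z)) = (∫⁻ z', ENNReal.ofReal
      (Q (z' - z) * |min (p z) (p z') - min (q z) (q z')| * g (z' - z))).toReal := by
    intro z
    refine integral_eq_lintegral_of_nonneg_ae (Eventually.of_forall fun z' => ?_) ?_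
    · exact mul_nonneg (mul_nonneg (hQ0 _) (abs_nonneg _)) (hg0 _)
    · exact (hfm.comp measurable_prodMk_left).aestronglyMeasurable
  have hinner_m : Measurable (fun z : Fin d → ℝ => ∫⁻ z', ENNReal.ofReal
      (Q (z' - z) * |min (p z) (p z') - min (q z) (q z')| * g (z' - z))) :=
    Measurable.lintegral_prod_right hΦm
  have hinner_ae : ∀ᵐ z : (Fin d → ℝ), (∫⁻ z', ENNReal.ofReal
      (Q (z' - z) * |min (p z) (p z') - min (q z) (q z')| * g (z' - z))) ≠ ⊤ := by
    have := ae_lt_top hinner_m (hLdef ▸ hL_ne)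
    filter_upwards [this] with z hz using hz.ne
  have hLHS : (∫ z : Fin d → ℝ, ∫ z' : Fin d → ℝ,
      Q (z' - z) * |min (p z) (p z') - min (q z) (q z')| * g (z' - z)) = L.toReal := by
    simp_rw [hG]
    rw [integral_eq_lintegral_of_nonneg_ae
      (Eventually.of_forall fun z => ENNReal.toReal_nonneg)
      hinner_m.ennreal_toReal.aestronglyMeasurable]
    congr 1
    rw [hLdef]
    refine lintegral_congr_ae ?_
    filter_upwards [hinner_ae] with z hz
    exact ENNReal.ofReal_toReal hz
  rw [hLHS]
  have h2 : (I * T + I * T).toReal = 2 * K * Tv := by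
    rw [hIeq, hTeq]
    rw [ENNReal.toReal_add (ENNReal.mul_ne_top ENNReal.ofReal_ne_top ENNReal.ofReal_ne_top)
      (ENNReal.mul_ne_top ENNReal.ofReal_ne_top ENNReal.ofReal_ne_top)]
    rw [ENNReal.toReal_mul, ENNReal.toReal_ofReal hK0, ENNReal.toReal_ofReal hTv0]
    ring
  calc L.toReal ≤ (I * T + I * T).toReal :=
        ENNReal.toReal_mono (by
          exact ENNReal.add_ne_top.2
            ⟨ENNReal.mul_ne_top hI_ne hT_ne, ENNReal.mul_ne_top hI_ne hT_ne⟩) hLle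
    _ = 2 * K * Tv := h2

end Helpers

/-- Stability of the expected squared jumping distance under total-variation perturbation of
the target density: for probability densities `p, q` on `ℝ^d`, positive definite matrices
`C` and `F`, and `W ∼ N(0, C)`,
`∫∫ ‖z'−z‖²_F |min{p(z), p(z')} − min{q(z), q(z')}| φ(z'; z, C) dz' dz
  ≤ 2 E[‖W‖²_F] ∫ |p − q|`. -/
theorem esjd_tv_stability {d : ℕ} (hd : 1 ≤ d)
    (p q : (Fin d → ℝ) → ℝ) (hpm : Measurable p) (hqm : Measurable q)
    (hp0 : ∀ x, 0 ≤ p x) (hq0 : ∀ x, 0 ≤ q x)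
    (hp1 : ∫ x, p x = 1) (hq1 : ∫ x, q x = 1)
    (C F : Matrix (Fin d) (Fin d) ℝ) (hC : C.PosDef) (hF : F.PosDef)
    {Ω : Type*} [MeasureSpace Ω] [IsProbabilityMeasure (ℙ : Measure Ω)]
    (W : Ω → (Fin d → ℝ)) (hWm : Measurable W)
    (hW : Measure.map W ℙ = mvGaussian 0 C) :
    ∫ z : Fin d → ℝ, ∫ z' : Fin d → ℝ,
        quadForm F (z' - z) * |min (p z) (p z') - min (q z) (q z')| * mvGaussianPdf z C z'
      ≤ 2 * (∫ ω, quadForm F (W ω) ∂ℙ) * ∫ z : Fin d → ℝ, |p z - q z| := by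
  have hp_int : Integrable p := integrable_of_integral_eq_one hp1
  have hq_int : Integrable q := integrable_of_integral_eq_one hq1
  have hQm : Measurable (quadForm F) := quadForm_measurable F
  have hgm : Measurable (mvGaussianPdf 0 C) := pdf_measurable 0 C
  have hQg_int : Integrable (fun x => quadForm F x * mvGaussianPdf 0 C x) :=
    esjd_moment_integrable hd C F hC hF
  have hpdf_eq : ∀ z z' : Fin d → ℝ, mvGaussianPdf z C z' = mvGaussianPdf 0 C (z' - z) := by
    intro z z'; simp [mvGaussianPdf, sub_zero]
  have hmain := esjd_main p q (quadForm F) (mvGaussianPdf 0 C) hpm hqm hQm hgm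
    (quadForm_nonneg_s16 hF) (pdf_nonneg hC 0) hp_int hq_int hQg_int
  have hE : (∫ ω, quadForm F (W ω) ∂ℙ) = ∫ x, quadForm F x * mvGaussianPdf 0 C x := by
    have h1 : ∫ ω, quadForm F (W ω) ∂ℙ = ∫ x, quadForm F x ∂(Measure.map W ℙ) :=
      (integral_map hWm.aemeasurable hQm.aestronglyMeasurable).symm
    rw [h1, hW]
    rw [show mvGaussian 0 C
      = volume.withDensity (fun x => ENNReal.ofReal (mvGaussianPdf 0 C x)) from rfl]
    rw [integral_eq_lintegral_of_nonneg_ae (Filter.Eventually.of_forall (quadForm_nonneg_s16 hF))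
      hQm.aestronglyMeasurable]
    rw [lintegral_withDensity_eq_lintegral_mul volume hgm.ennreal_ofReal hQm.ennreal_ofReal]
    rw [integral_eq_lintegral_of_nonneg_ae (Filter.Eventually.of_forall fun x =>
      mul_nonneg (quadForm_nonneg_s16 hF x) (pdf_nonneg hC 0 x))
      (hQm.mul hgm).aestronglyMeasurable]
    congr 1
    apply lintegral_congr
    intro x
    simp only [Pi.mul_apply]
    rw [← ENNReal.ofReal_mul (pdf_nonneg hC 0 x), mul_comm (mvGaussianPdf 0 C x) (quadForm F x)]
  have hfun : (∫ z : Fin d → ℝ, ∫ z' : Fin d → ℝ,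
        quadForm F (z' - z) * |min (p z) (p z') - min (q z) (q z')| * mvGaussianPdf z C z')
      = ∫ z : Fin d → ℝ, ∫ z' : Fin d → ℝ,
        quadForm F (z' - z) * |min (p z) (p z') - min (q z) (q z')|
          * mvGaussianPdf 0 C (z' - z) := by
    congr 1
    funext z
    congr 1
    funext z'
    rw [hpdf_eq z z']
  rw [hfun, hE]
  exact hmain
end
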